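/- arXiv:1312.7039 — 5 statements merged into one kernel-verified Lean document; each statement's English description precedes it below -/
import Mathlib

section
/- Let x*, d* ∈ ℝ^p satisfy the KKT system ΨᵗΨx* + d* = Ψᵗy and x* = T_λ(x* + d*). Then x* is a global minimizer of the functional f(x) = ½‖Ψx − y‖₂² + λ‖x‖₁ over ℝ^p. -/
open Matrix

/-- Componentwise soft-thresholding operator `T_λ(z)_i = max(|z_i| − λ, 0) · sign(z_i)`. -/
noncomputable def softThreshold {p : ℕ} (lam : ℝ) (z : Fin p → ℝ) : Fin p → ℝ :=
  fun i => max (|z i| - lam) 0 * Real.sign (z i)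

lemma soft_key (lam z : ℝ) (hlam : 0 < lam) :
    |z - max (|z| - lam) 0 * Real.sign z| ≤ lam ∧
    (z - max (|z| - lam) 0 * Real.sign z) * (max (|z| - lam) 0 * Real.sign z)
      = lam * |max (|z| - lam) 0 * Real.sign z| := by
  rcases lt_trichotomy z 0 with hz | hz | hz
  · rw [Real.sign_of_neg hz, abs_of_neg hz]
    rcases le_or_gt (-z) lam with h | h
    · rw [max_eq_right (by linarith)]
      constructor
      · rw [mul_comm, mul_zero, sub_zero, abs_of_neg hz]; linarith
      · simp
    · rw [max_eq_left (by linarith)]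
      have hx : (-z - lam) * (-1) = z + lam := by ring
      rw [hx]
      constructor
      · have : z - (z + lam) = -lam := by ring
        rw [this, abs_neg, abs_of_pos hlam]
      · rw [abs_of_neg (by linarith : z + lam < 0)]
        ring
  · subst hz; simp [hlam.le]
  · rw [Real.sign_of_pos hz, abs_of_pos hz]
    rcases le_or_gt z lam with h | h
    · rw [max_eq_right (by linarith)]
      constructor
      · rw [mul_comm, mul_zero, sub_zero, abs_of_pos hz]; linarith
      · simp
    · rw [max_eq_left (by linarith), mul_one]
      constructor
      · have : z - (z - lam) = lam := by ring
        rw [this, abs_of_pos hlam]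
      · rw [abs_of_pos (by linarith : (0:ℝ) < z - lam)]
        ring

/-- if `(x*, d*)` satisfies the KKT system, then `x*` is a global minimizer
of `x ↦ ½‖Ψx − y‖₂² + λ‖x‖₁`. -/
theorem stmt_1 {n p : ℕ} (Ψ : Matrix (Fin n) (Fin p) ℝ) (y : Fin n → ℝ)
    (lam : ℝ) (hlam : 0 < lam) (xstar dstar : Fin p → ℝ)
    (hK1 : Ψᵀ *ᵥ (Ψ *ᵥ xstar) + dstar = Ψᵀ *ᵥ y)
    (hK2 : xstar = softThreshold lam (xstar + dstar)) :
    ∀ x : Fin p → ℝ,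
      (1 / 2) * ∑ k, ((Ψ *ᵥ xstar - y) k) ^ 2 + lam * ∑ i, |xstar i| ≤
        (1 / 2) * ∑ k, ((Ψ *ᵥ x - y) k) ^ 2 + lam * ∑ i, |x i| := by
  intro x
  -- coordinatewise subgradient facts
  have key : ∀ i, |dstar i| ≤ lam ∧ dstar i * xstar i = lam * |xstar i| := by
    intro i
    have h2 := congrFun hK2 i
    simp only [softThreshold, Pi.add_apply] at h2
    set z := xstar i + dstar i with hzdef
    have hdi : dstar i = z - max (|z| - lam) 0 * Real.sign z := by
      rw [hzdef, ← h2]; ring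
    have hk := soft_key lam z hlam
    rw [hdi, h2]
    exact hk
  have hsum1 : ∑ i, dstar i * xstar i = lam * ∑ i, |xstar i| := by
    rw [Finset.mul_sum]
    exact Finset.sum_congr rfl fun i _ => (key i).2
  have hsum2 : ∑ i, dstar i * x i ≤ lam * ∑ i, |x i| := by
    rw [Finset.mul_sum]
    refine Finset.sum_le_sum fun i _ => ?_
    calc dstar i * x i ≤ |dstar i * x i| := le_abs_self _
      _ = |dstar i| * |x i| := abs_mul _ _
      _ ≤ lam * |x i| := mul_le_mul_of_nonneg_right (key i).1 (abs_nonneg _)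
  -- Ψᵀ(Ψx* - y) = -d*
  have hd : Ψᵀ *ᵥ (Ψ *ᵥ xstar - y) = -dstar := by
    rw [Matrix.mulVec_sub]
    funext k
    have := congrFun hK1 k
    simp only [Pi.add_apply] at this
    simp only [Pi.sub_apply, Pi.neg_apply]
    linarith
  -- cross term
  set u := Ψ *ᵥ xstar - y with hu
  set w := Ψ *ᵥ (x - xstar) with hw
  have hcross : ∑ k, u k * w k
      = (∑ i, dstar i * xstar i) - ∑ i, dstar i * x i := by
    have h1 : u ⬝ᵥ (Ψ *ᵥ (x - xstar)) = (Ψᵀ *ᵥ u) ⬝ᵥ (x - xstar) := by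
      rw [Matrix.dotProduct_mulVec, Matrix.mulVec_transpose]
    rw [hu] at h1
    rw [hd] at h1
    have : ∑ k, u k * w k = u ⬝ᵥ w := rfl
    rw [this, hw, hu, h1]
    simp only [dotProduct, Pi.neg_apply, Pi.sub_apply]
    rw [← Finset.sum_sub_distrib]
    exact Finset.sum_congr rfl fun i _ => by ring
  have hexp : ∀ k, (Ψ *ᵥ x - y) k = u k + w k := by
    intro k
    rw [hu, hw, Matrix.mulVec_sub]
    simp only [Pi.sub_apply, Pi.add_apply]
    ring
  have hsq : ∑ k, ((Ψ *ᵥ x - y) k) ^ 2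
      = ∑ k, u k ^ 2 + 2 * ∑ k, u k * w k + ∑ k, w k ^ 2 := by
    have h : ∀ k ∈ Finset.univ, ((Ψ *ᵥ x - y) k) ^ 2
        = u k ^ 2 + 2 * (u k * w k) + w k ^ 2 := fun k _ => by rw [hexp k]; ring
    rw [Finset.sum_congr rfl h, Finset.sum_add_distrib, Finset.sum_add_distrib,
      ← Finset.mul_sum]
  have hwpos : 0 ≤ ∑ k, w k ^ 2 := Finset.sum_nonneg fun k _ => sq_nonneg _
  rw [hsq]
  have hu' : ∑ k, (u k) ^ 2 = ∑ k, ((Ψ *ᵥ xstar - y) k) ^ 2 := by rw [hu]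
  linarith [hcross, hsum1, hsum2, hwpos, hu'.symm]
end

section
/- In the noise-free setting, let A ⊆ A† with B = A†∖A, suppose Ψ satisfies RIP of order T+1 with constant δ < 1, let d ∈ ℝ^p have |d_i| = λ for all i ∈ A, and let x_A = (Ψ_AᵗΨ_A)⁻¹(Ψ_Aᵗ y − d_A). Then ‖x_A + d_A − x†_A‖₂ ≤ (δ/(1−δ))‖x†_B‖₂ + (δ/(1−δ))‖d_A‖₂. -/
open Matrix

/-- The submatrix `Ψ_A` of `Ψ` consisting of the columns indexed by `A`. -/
def colSub {n p : ℕ} (Ψ : Matrix (Fin n) (Fin p) ℝ) (A : Finset (Fin p)) :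
    Matrix (Fin n) {i // i ∈ A} ℝ :=
  Matrix.of fun i j => Ψ i j.1

/-- `Ψ` satisfies the restricted isometry property of order `k` with constant `δ`:
`(1 − δ)‖x‖₂² ≤ ‖Ψx‖₂² ≤ (1 + δ)‖x‖₂²` for all `x` with at most `k` nonzero entries. -/
def HasRIP {n p : ℕ} (Ψ : Matrix (Fin n) (Fin p) ℝ) (k : ℕ) (δ : ℝ) : Prop :=
  ∀ x : Fin p → ℝ, (Finset.univ.filter (fun i => x i ≠ 0)).card ≤ k →
    (1 - δ) * (∑ i, x i ^ 2) ≤ ∑ j, (Ψ *ᵥ x) j ^ 2 ∧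
      ∑ j, (Ψ *ᵥ x) j ^ 2 ≤ (1 + δ) * (∑ i, x i ^ 2)


lemma aux_amgm (r a b c : ℝ) (ha : 0 ≤ a) (hb : 0 ≤ b) (hc : 0 ≤ c)
    (h : ∀ t : ℝ, 0 < t → r ≤ c/2*(t^2*a^2 + b^2/t^2)) : r ≤ c*a*b := by
  have main : ∀ u : ℝ, 0 < u → r ≤ c*a*b + c*(a+b)/2*u := by
    intro u hu
    have hau : 0 < a + u := by linarith
    have hbu : 0 < b + u := by linarith
    have ht : (0:ℝ) < Real.sqrt ((b+u)/(a+u)) := Real.sqrt_pos.2 (by positivity)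
    have h0 := h _ ht
    rw [Real.sq_sqrt (by positivity)] at h0
    have e2 : b^2/((b+u)/(a+u)) = b^2*(a+u)/(b+u) := by
      rw [div_div_eq_mul_div]
    rw [e2] at h0
    have h1 : (b+u)/(a+u)*a^2 ≤ (b+u)*a := by
      rw [div_mul_eq_mul_div, div_le_iff₀ hau]
      nlinarith [mul_nonneg (mul_nonneg hbu.le ha) hu.le, mul_nonneg (mul_nonneg hau.le hb) hu.le]
    have h2 : b^2*(a+u)/(b+u) ≤ b*(a+u) := by
      rw [div_le_iff₀ hbu]
      nlinarith [mul_nonneg (mul_nonneg hbu.le ha) hu.le, mul_nonneg (mul_nonneg hau.le hb) hu.le]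
    nlinarith
  refine le_of_forall_pos_le_add ?_
  intro ε hε
  rcases eq_or_lt_of_le (show (0:ℝ) ≤ c*(a+b)/2 by positivity) with hK | hK
  · have := main 1 one_pos
    rw [← hK] at this
    linarith
  · have := main (ε/(c*(a+b)/2)) (by positivity)
    rw [mul_div_cancel₀ _ (ne_of_gt hK)] at this
    linarith


variable {m : Type*} [Fintype m]

lemma dot_self_eq (x : m → ℝ) : x ⬝ᵥ x = ∑ j, x j ^ 2 := by
  simp [dotProduct, sq]

lemma dot_self_nonneg (x : m → ℝ) : 0 ≤ x ⬝ᵥ x :=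
  Finset.sum_nonneg fun i _ => mul_self_nonneg _

lemma dot_cs (x y : m → ℝ) : x ⬝ᵥ y ≤ Real.sqrt (x ⬝ᵥ x) * Real.sqrt (y ⬝ᵥ y) := by
  have h := Finset.sum_mul_sq_le_sq_mul_sq Finset.univ x y
  have h2 : x ⬝ᵥ y ≤ |x ⬝ᵥ y| := le_abs_self _
  have h3 : |x ⬝ᵥ y| = Real.sqrt ((x ⬝ᵥ y)^2) := (Real.sqrt_sq_eq_abs _).symm
  calc x ⬝ᵥ y ≤ Real.sqrt ((x ⬝ᵥ y)^2) := h3 ▸ h2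
    _ ≤ Real.sqrt ((∑ i, x i ^ 2) * ∑ i, y i ^ 2) := Real.sqrt_le_sqrt (by
        simpa [dotProduct] using h)
    _ = Real.sqrt (x ⬝ᵥ x) * Real.sqrt (y ⬝ᵥ y) := by
        rw [Real.sqrt_mul (Finset.sum_nonneg fun i _ => sq_nonneg _), dot_self_eq, dot_self_eq]

lemma dot_mulVec_symm (M : Matrix m m ℝ) (hsym : Mᵀ = M) (x y : m → ℝ) :
    x ⬝ᵥ M *ᵥ y = y ⬝ᵥ M *ᵥ x := by
  have h : x ᵥ* M = M *ᵥ x := by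
    conv_lhs => rw [← hsym]
    rw [vecMul_transpose]
  rw [dotProduct_mulVec, h, dotProduct_comm]

lemma sym_op_bound (M : Matrix m m ℝ) (hsym : Mᵀ = M) (δ : ℝ) (hδ : 0 ≤ δ)
    (hQ : ∀ z : m → ℝ, |z ⬝ᵥ M *ᵥ z| ≤ δ * (z ⬝ᵥ z)) (w : m → ℝ) :
    Real.sqrt ((M *ᵥ w) ⬝ᵥ (M *ᵥ w)) ≤ δ * Real.sqrt (w ⬝ᵥ w) := by
  have hbil : ∀ x y : m → ℝ, x ⬝ᵥ M *ᵥ y ≤ δ/2 * (x ⬝ᵥ x + y ⬝ᵥ y) := by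
    intro x y
    have h1 := (abs_le.1 (hQ (x + y))).2
    have h2 := (abs_le.1 (hQ (x - y))).1
    have e1 : (x + y) ⬝ᵥ M *ᵥ (x + y) =
        x ⬝ᵥ M *ᵥ x + x ⬝ᵥ M *ᵥ y + y ⬝ᵥ M *ᵥ x + y ⬝ᵥ M *ᵥ y := by
      simp [mulVec_add, dotProduct_add, add_dotProduct]; ring
    have e2 : (x - y) ⬝ᵥ M *ᵥ (x - y) =
        x ⬝ᵥ M *ᵥ x - x ⬝ᵥ M *ᵥ y - y ⬝ᵥ M *ᵥ x + y ⬝ᵥ M *ᵥ y := by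
      simp [mulVec_sub, dotProduct_sub, sub_dotProduct]; ring
    have e3 : (x + y) ⬝ᵥ (x + y) = x ⬝ᵥ x + 2*(x ⬝ᵥ y) + y ⬝ᵥ y := by
      simp [dotProduct_add, add_dotProduct, dotProduct_comm y x]; ring
    have e4 : (x - y) ⬝ᵥ (x - y) = x ⬝ᵥ x - 2*(x ⬝ᵥ y) + y ⬝ᵥ y := by
      simp [dotProduct_sub, sub_dotProduct, dotProduct_comm y x]; ring
    have hs := dot_mulVec_symm M hsym y x
    rw [e1, e3] at h1
    rw [e2, e4] at h2
    linarith
  set a := Real.sqrt ((M *ᵥ w) ⬝ᵥ (M *ᵥ w)) with ha_def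
  set b := Real.sqrt (w ⬝ᵥ w) with hb_def
  have ha : 0 ≤ a := Real.sqrt_nonneg _
  have hb : 0 ≤ b := Real.sqrt_nonneg _
  have key : a^2 ≤ δ*a*b := by
    have ha2 : a^2 = (M *ᵥ w) ⬝ᵥ (M *ᵥ w) := Real.sq_sqrt (dot_self_nonneg _)
    have hb2 : b^2 = w ⬝ᵥ w := Real.sq_sqrt (dot_self_nonneg _)
    have amgm := aux_amgm ((M *ᵥ w) ⬝ᵥ (M *ᵥ w)) a b δ ha hb hδ ?_
    · rw [ha2]; linarith [amgm]
    intro t ht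
    have := hbil (t • (M *ᵥ w)) ((1/t) • w)
    rw [mulVec_smul, smul_dotProduct, dotProduct_smul, smul_dotProduct, dotProduct_smul,
        smul_dotProduct, dotProduct_smul] at this
    simp only [smul_eq_mul] at this
    have ht' : t * (1/t * ((M *ᵥ w) ⬝ᵥ M *ᵥ w)) = (M *ᵥ w) ⬝ᵥ M *ᵥ w := by
      field_simp
    rw [ht'] at this
    calc (M *ᵥ w) ⬝ᵥ (M *ᵥ w) ≤ δ/2 * (t * (t * ((M *ᵥ w) ⬝ᵥ (M *ᵥ w))) +
          1/t * (1/t * (w ⬝ᵥ w))) := this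
      _ = δ/2*(t^2*a^2 + b^2/t^2) := by rw [ha2, hb2]; field_simp
  rcases eq_or_lt_of_le ha with h0 | h0
  · rw [← h0]; positivity
  · nlinarith

def extA {p : ℕ} (A : Finset (Fin p)) (u : {i // i ∈ A} → ℝ) : Fin p → ℝ :=
  fun i => if h : i ∈ A then u ⟨i, h⟩ else 0

lemma sum_subtype_eq {p : ℕ} (A : Finset (Fin p)) (f : Fin p → ℝ) :
    ∑ j : {i // i ∈ A}, f j.1 = ∑ j ∈ A, f j := by
  rw [Finset.univ_eq_attach, Finset.sum_attach]

lemma mulVec_extA {n p : ℕ} (Ψ : Matrix (Fin n) (Fin p) ℝ) (A : Finset (Fin p))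
    (u : {i // i ∈ A} → ℝ) : Ψ *ᵥ extA A u = colSub Ψ A *ᵥ u := by
  funext i
  simp only [mulVec, dotProduct, colSub, Matrix.of_apply]
  have h1 : ∑ j ∈ A, Ψ i j * extA A u j = ∑ j, Ψ i j * extA A u j :=
    Finset.sum_subset (Finset.subset_univ A) (fun x _ hx => by simp [extA, hx])
  have h2 : ∑ j ∈ A.attach, Ψ i j.1 * extA A u j.1 = ∑ j ∈ A, Ψ i j * extA A u j :=
    Finset.sum_attach A (fun j => Ψ i j * extA A u j)
  rw [← h1, ← h2, Finset.univ_eq_attach]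
  refine Finset.sum_congr rfl fun j _ => ?_
  simp [extA, j.2]

lemma dot_self_extA {p : ℕ} (A : Finset (Fin p)) (u : {i // i ∈ A} → ℝ) :
    extA A u ⬝ᵥ extA A u = u ⬝ᵥ u := by
  simp only [dotProduct]
  have h1 : ∑ j ∈ A, extA A u j * extA A u j = ∑ j, extA A u j * extA A u j :=
    Finset.sum_subset (Finset.subset_univ A) (fun x _ hx => by simp [extA, hx])
  have h2 : ∑ j ∈ A.attach, extA A u j.1 * extA A u j.1
      = ∑ j ∈ A, extA A u j * extA A u j := Finset.sum_attach A (fun j => extA A u j * extA A u j)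
  rw [← h1, ← h2, Finset.univ_eq_attach]
  refine Finset.sum_congr rfl fun j _ => ?_
  simp [extA, j.2]

lemma card_support_extA {p : ℕ} (A : Finset (Fin p)) (u : {i // i ∈ A} → ℝ) :
    (Finset.univ.filter (fun i => extA A u i ≠ 0)).card ≤ A.card := by
  apply Finset.card_le_card
  intro i hi
  rw [Finset.mem_filter] at hi
  by_contra hiA
  exact hi.2 (by simp [extA, hiA])

lemma dot_triangle {m : Type*} [Fintype m] (u v : m → ℝ) :
    Real.sqrt ((u + v) ⬝ᵥ (u + v)) ≤ Real.sqrt (u ⬝ᵥ u) + Real.sqrt (v ⬝ᵥ v) := by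
  have hcs := dot_cs u v
  have hu := dot_self_nonneg u
  have hv := dot_self_nonneg v
  have hsu : Real.sqrt (u ⬝ᵥ u) ^ 2 = u ⬝ᵥ u := Real.sq_sqrt hu
  have hsv : Real.sqrt (v ⬝ᵥ v) ^ 2 = v ⬝ᵥ v := Real.sq_sqrt hv
  have hexp : (u + v) ⬝ᵥ (u + v) = u ⬝ᵥ u + 2*(u ⬝ᵥ v) + v ⬝ᵥ v := by
    simp [dotProduct_add, add_dotProduct, dotProduct_comm v u]; ring
  have h1 : (u + v) ⬝ᵥ (u + v) ≤ (Real.sqrt (u ⬝ᵥ u) + Real.sqrt (v ⬝ᵥ v))^2 := by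
    rw [hexp]; nlinarith
  calc Real.sqrt ((u + v) ⬝ᵥ (u + v))
      ≤ Real.sqrt ((Real.sqrt (u ⬝ᵥ u) + Real.sqrt (v ⬝ᵥ v))^2) := Real.sqrt_le_sqrt h1
    _ = Real.sqrt (u ⬝ᵥ u) + Real.sqrt (v ⬝ᵥ v) := by
        rw [Real.sqrt_sq (by positivity)]

set_option maxHeartbeats 1000000 in
/-- error bound on the active set after one Newton step (noise-free setting). -/
theorem stmt_8 {n p : ℕ} (Ψ : Matrix (Fin n) (Fin p) ℝ)
    (xdag : Fin p → ℝ) (Adag : Finset (Fin p))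
    (hAdag : Adag = Finset.univ.filter (fun i => xdag i ≠ 0))
    (T : ℕ) (hT : T = Adag.card)
    (y : Fin n → ℝ) (hy : y = Ψ *ᵥ xdag)
    (δ : ℝ) (hδ0 : 0 < δ) (hδ1 : δ < 1)
    (hRIP : HasRIP Ψ (T + 1) δ)
    (lam : ℝ) (hlam : 0 < lam)
    (A : Finset (Fin p)) (hA : A ⊆ Adag)
    (B : Finset (Fin p)) (hB : B = Adag \ A)
    (d : Fin p → ℝ) (hdA : ∀ i ∈ A, |d i| = lam)
    (xA : {i // i ∈ A} → ℝ)
    (hxA : xA = ((colSub Ψ A)ᵀ * colSub Ψ A)⁻¹ *ᵥ ((colSub Ψ A)ᵀ *ᵥ y - fun j => d j.1))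
 :
    Real.sqrt (∑ j : {i // i ∈ A}, (xA j + d j.1 - xdag j.1) ^ 2) ≤
      δ / (1 - δ) * Real.sqrt (∑ i ∈ B, xdag i ^ 2) +
        δ / (1 - δ) * Real.sqrt (∑ i ∈ A, d i ^ 2) := by
  have hδ' : (0:ℝ) < 1 - δ := by linarith
  set ΨA := colSub Ψ A with hΨA
  set G := ΨAᵀ * ΨA with hG
  set dA : {i // i ∈ A} → ℝ := fun j => d j.1 with hdA'
  set xdA : {i // i ∈ A} → ℝ := fun j => xdag j.1 with hxdA'
  set e : {i // i ∈ A} → ℝ := xA + dA - xdA with he_def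
  set xB : Fin p → ℝ := fun i => if i ∈ B then xdag i else 0 with hxB
  have hcardA : A.card ≤ T := hT ▸ Finset.card_le_card hA
  have hAB : A ∪ B = Adag := by rw [hB]; exact Finset.union_sdiff_of_subset hA
  have hcardAB : (A ∪ B).card = T := by rw [hAB, hT]
  have hABdisj : Disjoint A B := by rw [hB]; exact Finset.disjoint_sdiff
  -- RIP restricted to vectors supported on A
  have RIP_A : ∀ u : {i // i ∈ A} → ℝ,
      (1-δ) * (u ⬝ᵥ u) ≤ (ΨA *ᵥ u) ⬝ᵥ (ΨA *ᵥ u) ∧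
      (ΨA *ᵥ u) ⬝ᵥ (ΨA *ᵥ u) ≤ (1+δ) * (u ⬝ᵥ u) := by
    intro u
    have hc : (Finset.univ.filter (fun i => extA A u i ≠ 0)).card ≤ T + 1 :=
      le_trans (card_support_extA A u) (le_trans hcardA (Nat.le_succ T))
    have h := hRIP (extA A u) hc
    rw [mulVec_extA, ← hΨA] at h
    have h1 : ∑ i, extA A u i ^ 2 = u ⬝ᵥ u := by rw [← dot_self_eq, dot_self_extA]
    have h2 : ∑ j, (ΨA *ᵥ u) j ^ 2 = (ΨA *ᵥ u) ⬝ᵥ (ΨA *ᵥ u) := (dot_self_eq _).symm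
    rw [h1, h2] at h
    exact h
  have hGdot : ∀ u v : {i // i ∈ A} → ℝ, u ⬝ᵥ G *ᵥ v = (ΨA *ᵥ u) ⬝ᵥ (ΨA *ᵥ v) := by
    intro u v
    rw [hG, ← mulVec_mulVec, dotProduct_mulVec, vecMul_transpose]
  have hGsym : Gᵀ = G := by rw [hG, transpose_mul, transpose_transpose]
  have hGdet : IsUnit G.det := by
    rw [← Matrix.isUnit_iff_isUnit_det, ← Matrix.mulVec_injective_iff_isUnit]
    intro u v huv
    have h0 : G *ᵥ (u - v) = 0 := by
      rw [mulVec_sub, show G *ᵥ u = G *ᵥ v from huv, sub_self]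
    have h1 : (u - v) ⬝ᵥ G *ᵥ (u - v) = 0 := by rw [h0, dotProduct_zero]
    have h2 := (RIP_A (u - v)).1
    rw [← hGdot, h1] at h2
    have h3 : (u - v) ⬝ᵥ (u - v) = 0 :=
      le_antisymm (by nlinarith [dot_self_nonneg (u - v)]) (dot_self_nonneg _)
    exact sub_eq_zero.1 (dotProduct_self_eq_zero.1 h3)
  have hGxA : G *ᵥ xA = ΨAᵀ *ᵥ y - dA := by
    rw [hxA, mulVec_mulVec, Matrix.mul_nonsing_inv G hGdet, one_mulVec]
  -- decomposition of the true signal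
  have hxdag_dec : xdag = extA A xdA + xB := by
    funext i
    by_cases hiA : i ∈ A
    · have hiB : i ∉ B := fun hiB => Finset.disjoint_left.1 hABdisj hiA hiB
      simp [extA, hiA, hxB, hiB, hxdA']
    · by_cases hiB : i ∈ B
      · simp [extA, hiA, hxB, hiB]
      · have hiAd : i ∉ Adag := by
          rw [← hAB, Finset.mem_union]
          tauto
        rw [hAdag] at hiAd
        simp only [Finset.mem_filter, Finset.mem_univ, true_and, not_not] at hiAd
        simp [extA, hiA, hxB, hiB, hiAd]
  have hy2 : ΨAᵀ *ᵥ y = G *ᵥ xdA + ΨAᵀ *ᵥ (Ψ *ᵥ xB) := by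
    rw [hy, hxdag_dec, mulVec_add, mulVec_extA, ← hΨA, mulVec_add, mulVec_mulVec, ← hG]
  set v1 : {i // i ∈ A} → ℝ := ΨAᵀ *ᵥ (Ψ *ᵥ xB) with hv1
  have heq : G *ᵥ e = v1 + (G - 1) *ᵥ dA := by
    rw [he_def, mulVec_sub, mulVec_add, hGxA, hy2, sub_mulVec, one_mulVec]
    abel
  -- lower bound via RIP
  set SE := Real.sqrt (e ⬝ᵥ e) with hSE
  set SGe := Real.sqrt ((G *ᵥ e) ⬝ᵥ (G *ᵥ e)) with hSGe
  have hlow : (1-δ) * SE ≤ SGe := by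
    have h1 := (RIP_A e).1
    rw [← hGdot] at h1
    have h2 := dot_cs e (G *ᵥ e)
    have hse : SE^2 = e ⬝ᵥ e := Real.sq_sqrt (dot_self_nonneg e)
    rw [← hSE, ← hSGe] at h2
    rcases eq_or_lt_of_le (Real.sqrt_nonneg (e ⬝ᵥ e)) with h0 | h0
    · rw [hSE, ← h0, mul_zero]
      exact Real.sqrt_nonneg _
    · rw [← hSE] at h0
      nlinarith
  -- bound on the (G - 1) part
  have hQ : ∀ z : {i // i ∈ A} → ℝ, |z ⬝ᵥ (G - 1) *ᵥ z| ≤ δ * (z ⬝ᵥ z) := by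
    intro z
    rw [sub_mulVec, one_mulVec, dotProduct_sub, hGdot]
    have h := RIP_A z
    have hz := dot_self_nonneg z
    rw [abs_le]
    constructor <;> nlinarith [h.1, h.2]
  have hGsub_sym : (G - 1)ᵀ = G - 1 := by rw [transpose_sub, transpose_one, hGsym]
  have h2bound : Real.sqrt (((G - 1) *ᵥ dA) ⬝ᵥ ((G - 1) *ᵥ dA)) ≤ δ * Real.sqrt (dA ⬝ᵥ dA) :=
    sym_op_bound (G - 1) hGsub_sym δ hδ0.le hQ dA
  -- bound on the cross part
  have h1bound : Real.sqrt (v1 ⬝ᵥ v1) ≤ δ * Real.sqrt (xB ⬝ᵥ xB) := by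
    set av := extA A v1 with hav
    have hav_dot : av ⬝ᵥ av = v1 ⬝ᵥ v1 := dot_self_extA A v1
    have havB : ∀ i, av i * xB i = 0 := by
      intro i
      by_cases hiA : i ∈ A
      · have hiB : i ∉ B := fun hiB => Finset.disjoint_left.1 hABdisj hiA hiB
        simp [hxB, hiB]
      · simp [hav, extA, hiA]
    have havxB : av ⬝ᵥ xB = 0 := Finset.sum_eq_zero fun i _ => havB i
    have hxBav : xB ⬝ᵥ av = 0 := by rw [dotProduct_comm]; exact havxB
    have hPa : Ψ *ᵥ av = ΨA *ᵥ v1 := mulVec_extA Ψ A v1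
    have hcross : (ΨA *ᵥ v1) ⬝ᵥ (Ψ *ᵥ xB) ≤
        δ * Real.sqrt (v1 ⬝ᵥ v1) * Real.sqrt (xB ⬝ᵥ xB) := by
      refine aux_amgm _ _ _ _ (Real.sqrt_nonneg _) (Real.sqrt_nonneg _) hδ0.le ?_
      intro t ht
      have htne : t ≠ 0 := ne_of_gt ht
      have ha2 : Real.sqrt (v1 ⬝ᵥ v1) ^ 2 = v1 ⬝ᵥ v1 := Real.sq_sqrt (dot_self_nonneg _)
      have hb2 : Real.sqrt (xB ⬝ᵥ xB) ^ 2 = xB ⬝ᵥ xB := Real.sq_sqrt (dot_self_nonneg _)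
      set u := t • av + (1/t) • xB with hu_def
      set v := t • av - (1/t) • xB with hv_def
      have hsupp : ∀ w : Fin p → ℝ, (∀ i, i ∉ A → i ∉ B → w i = 0) →
          (Finset.univ.filter (fun i => w i ≠ 0)).card ≤ T + 1 := by
        intro w hw
        refine le_trans (Finset.card_le_card ?_) (by rw [hcardAB]; exact Nat.le_succ T)
        intro i hi
        rw [Finset.mem_filter] at hi
        rw [Finset.mem_union]
        by_contra hc
        push_neg at hc
        exact hi.2 (hw i hc.1 hc.2)
      have hmemu : ∀ i, i ∉ A → i ∉ B → u i = 0 := by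
        intro i h1 h2
        simp [hu_def, hav, extA, h1, hxB, h2]
      have hmemv : ∀ i, i ∉ A → i ∉ B → v i = 0 := by
        intro i h1 h2
        simp [hv_def, hav, extA, h1, hxB, h2]
      have hu := hRIP u (hsupp u hmemu)
      have hv := hRIP v (hsupp v hmemv)
      set Pa := Ψ *ᵥ av with hPa'
      set Pb := Ψ *ᵥ xB with hPb'
      have hΨu : Ψ *ᵥ u = t • Pa + (1/t) • Pb := by
        rw [hu_def, mulVec_add, mulVec_smul, mulVec_smul, ← hPa', ← hPb']
      have hΨv : Ψ *ᵥ v = t • Pa - (1/t) • Pb := by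
        rw [hv_def, mulVec_sub, mulVec_smul, mulVec_smul, ← hPa', ← hPb']
      have iu : ∑ j, (Ψ *ᵥ u) j ^ 2 =
          t^2 * (Pa ⬝ᵥ Pa) + 2 * (Pa ⬝ᵥ Pb) + (1/t)^2 * (Pb ⬝ᵥ Pb) := by
        rw [← dot_self_eq, hΨu]
        simp only [dotProduct_add, add_dotProduct, dotProduct_smul, smul_dotProduct,
          smul_eq_mul, dotProduct_comm Pb Pa]
        field_simp
        ring
      have iv : ∑ j, (Ψ *ᵥ v) j ^ 2 =
          t^2 * (Pa ⬝ᵥ Pa) - 2 * (Pa ⬝ᵥ Pb) + (1/t)^2 * (Pb ⬝ᵥ Pb) := by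
        rw [← dot_self_eq, hΨv]
        simp only [dotProduct_sub, sub_dotProduct, dotProduct_smul, smul_dotProduct,
          smul_eq_mul, dotProduct_comm Pb Pa]
        field_simp
        ring
      have su : ∑ i, u i ^ 2 = t^2 * (av ⬝ᵥ av) + (1/t)^2 * (xB ⬝ᵥ xB) := by
        rw [← dot_self_eq, hu_def]
        simp only [dotProduct_add, add_dotProduct, dotProduct_smul, smul_dotProduct,
          smul_eq_mul, havxB, hxBav, mul_zero, add_zero, zero_add]
        ring
      have sv : ∑ i, v i ^ 2 = t^2 * (av ⬝ᵥ av) + (1/t)^2 * (xB ⬝ᵥ xB) := by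
        rw [← dot_self_eq, hv_def]
        simp only [dotProduct_sub, sub_dotProduct, dotProduct_smul, smul_dotProduct,
          smul_eq_mul, havxB, hxBav, mul_zero, add_zero, zero_add, sub_zero, zero_sub,
          neg_zero]
        ring
      have key1 := hu.2
      have key2 := hv.1
      rw [iu, su] at key1
      rw [iv, sv] at key2
      have hfin : Pa ⬝ᵥ Pb ≤ δ/2 * (t^2 * (av ⬝ᵥ av) + (1/t)^2 * (xB ⬝ᵥ xB)) := by
        linarith
      have ht2 : (1/t)^2 * (xB ⬝ᵥ xB) = (xB ⬝ᵥ xB) / t^2 := by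
        field_simp
      rw [← hPa, ha2, hb2, ← hav_dot, ← ht2]
      exact hfin
    have hv1sq : v1 ⬝ᵥ v1 = (ΨA *ᵥ v1) ⬝ᵥ (Ψ *ᵥ xB) := by
      nth_rewrite 2 [hv1]
      rw [dotProduct_mulVec, vecMul_transpose]
    have hsq : Real.sqrt (v1 ⬝ᵥ v1) ^ 2 ≤
        δ * Real.sqrt (v1 ⬝ᵥ v1) * Real.sqrt (xB ⬝ᵥ xB) := by
      calc Real.sqrt (v1 ⬝ᵥ v1) ^ 2 = v1 ⬝ᵥ v1 := Real.sq_sqrt (dot_self_nonneg _)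
        _ = (ΨA *ᵥ v1) ⬝ᵥ (Ψ *ᵥ xB) := hv1sq
        _ ≤ δ * Real.sqrt (v1 ⬝ᵥ v1) * Real.sqrt (xB ⬝ᵥ xB) := hcross
    rcases eq_or_lt_of_le (Real.sqrt_nonneg (v1 ⬝ᵥ v1)) with h0 | h0
    · rw [← h0]; positivity
    · nlinarith
  -- final assembly
  have htri : SGe ≤ Real.sqrt (v1 ⬝ᵥ v1) +
      Real.sqrt (((G - 1) *ᵥ dA) ⬝ᵥ ((G - 1) *ᵥ dA)) := by
    rw [hSGe, heq]
    exact dot_triangle _ _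
  have hmain : (1-δ) * SE ≤ δ * Real.sqrt (xB ⬝ᵥ xB) + δ * Real.sqrt (dA ⬝ᵥ dA) := by
    linarith
  have gLHS : ∑ j : {i // i ∈ A}, (xA j + d j.1 - xdag j.1) ^ 2 = e ⬝ᵥ e := by
    rw [dot_self_eq]
    refine Finset.sum_congr rfl fun j _ => ?_
    simp [he_def, hdA', hxdA']
  have gB : ∑ i ∈ B, xdag i ^ 2 = xB ⬝ᵥ xB := by
    rw [dot_self_eq]
    rw [← Finset.sum_subset (Finset.subset_univ B) (fun x _ hx => by simp [hxB, hx])]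
    exact Finset.sum_congr rfl fun i hi => by simp [hxB, hi]
  have gD : ∑ i ∈ A, d i ^ 2 = dA ⬝ᵥ dA := by
    rw [dot_self_eq, ← sum_subtype_eq A (fun i => d i ^ 2)]
  rw [gLHS, gB, gD, ← hSE]
  rw [div_mul_eq_mul_div, div_mul_eq_mul_div, ← add_div, le_div_iff₀ hδ']
  linarith
end

section
/- In the noise-free setting, let A ⊆ A† with B = A†∖A, suppose Ψ satisfies RIP of order T+1 with constant δ < 1, let d ∈ ℝ^p have |d_i| = λ for all i ∈ A, let x_A = (Ψ_AᵗΨ_A)⁻¹(Ψ_Aᵗ y − d_A), and define d_i = Ψ_iᵗ(y − Ψ_A x_A) for i ∉ A. Then for every i ∉ A† one has |d_i| ≤ (δ/(1−δ))(‖x†_B‖₂ + ‖d_A‖₂). -/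
open Matrix

namespace Stmt9

variable {n p : ℕ}

/-- Extension of a vector on a subset by zero. -/
def ext (A : Finset (Fin p)) (w : {i // i ∈ A} → ℝ) : Fin p → ℝ :=
  fun i => if h : i ∈ A then w ⟨i, h⟩ else 0

lemma ext_of_not_mem {A : Finset (Fin p)} (w : {i // i ∈ A} → ℝ) {i : Fin p} (h : i ∉ A) :
    ext A w i = 0 := by simp [ext, h]

lemma ext_mulVec (Ψ : Matrix (Fin n) (Fin p) ℝ) (A : Finset (Fin p)) (w : {i // i ∈ A} → ℝ) :
    Ψ *ᵥ ext A w = colSub Ψ A *ᵥ w := by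
  funext j
  show ∑ i, Ψ j i * ext A w i = ∑ i : {i // i ∈ A}, colSub Ψ A j i * w i
  rw [Finset.univ_eq_attach]
  rw [← Finset.sum_subset A.subset_univ (fun x _ hx => by simp [ext_of_not_mem w hx])]
  rw [← Finset.sum_attach A (fun i => Ψ j i * ext A w i)]
  exact Finset.sum_congr rfl fun i _ => by simp [ext, i.2, colSub]

lemma ext_sumsq (A : Finset (Fin p)) (w : {i // i ∈ A} → ℝ) :
    ∑ i, ext A w i ^ 2 = ∑ i : {i // i ∈ A}, w i ^ 2 := by
  rw [Finset.univ_eq_attach]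
  rw [← Finset.sum_subset A.subset_univ (fun x _ hx => by simp [ext_of_not_mem w hx])]
  rw [← Finset.sum_attach A (fun i => ext A w i ^ 2)]
  exact Finset.sum_congr rfl fun i _ => by simp [ext, i.2]

/-- Support of a vector. -/
noncomputable def supp (x : Fin p → ℝ) : Finset (Fin p) :=
  Finset.univ.filter (fun i => x i ≠ 0)

lemma supp_subset {x : Fin p → ℝ} {S : Finset (Fin p)} (h : ∀ i ∉ S, x i = 0) :
    supp x ⊆ S := by
  intro i hi
  simp only [supp, Finset.mem_filter] at hi
  by_contra hc
  exact hi.2 (h i hc)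

lemma sum_sq_of_disj {a b : Fin p → ℝ} (hdisj : ∀ i, a i = 0 ∨ b i = 0) :
    ∑ i, (a i + b i) ^ 2 = ∑ i, a i ^ 2 + ∑ i, b i ^ 2 := by
  rw [← Finset.sum_add_distrib]
  apply Finset.sum_congr rfl
  intro i _
  rcases hdisj i with h | h <;> rw [h] <;> ring

lemma cross' {Ψ : Matrix (Fin n) (Fin p) ℝ} {k : ℕ} {δ : ℝ} (hRIP : HasRIP Ψ k δ)
    (a b : Fin p → ℝ) (hcard : (supp a).card + (supp b).card ≤ k)
    (hdisj : ∀ i, a i = 0 ∨ b i = 0) :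
    (Ψ *ᵥ a) ⬝ᵥ (Ψ *ᵥ b) ≤ δ / 2 * (∑ i, a i ^ 2 + ∑ i, b i ^ 2) := by
  have hcards : ∀ c : Fin p → ℝ, (∀ i, c i ≠ 0 → a i ≠ 0 ∨ b i ≠ 0) →
      (Finset.univ.filter (fun i => c i ≠ 0)).card ≤ k := by
    intro c hc
    refine le_trans (le_trans (Finset.card_le_card ?_) (Finset.card_union_le _ _)) hcard
    intro i hi
    simp only [Finset.mem_filter, Finset.mem_union, supp] at *
    rcases hc i hi.2 with h | h
    · exact Or.inl ⟨hi.1, h⟩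
    · exact Or.inr ⟨hi.1, h⟩
  have h1 := (hRIP (a + b) (hcards _ (fun i hi => by
    by_contra hc; push_neg at hc
    exact hi (by simp [hc.1, hc.2]))) ).2
  have h2 := (hRIP (a - b) (hcards _ (fun i hi => by
    by_contra hc; push_neg at hc
    exact hi (by simp [hc.1, hc.2]))) ).1
  have hs1 : ∑ i, (a + b) i ^ 2 = ∑ i, a i ^ 2 + ∑ i, b i ^ 2 := sum_sq_of_disj hdisj
  have hs2 : ∑ i, (a - b) i ^ 2 = ∑ i, a i ^ 2 + ∑ i, b i ^ 2 := by
    have := sum_sq_of_disj (a := a) (b := -b) (fun i => (hdisj i).imp id (by simp +contextual))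
    simpa [sub_eq_add_neg] using this
  rw [hs1] at h1; rw [hs2] at h2
  have hid : ∑ j, (Ψ *ᵥ (a + b)) j ^ 2 - ∑ j, (Ψ *ᵥ (a - b)) j ^ 2
      = 4 * ((Ψ *ᵥ a) ⬝ᵥ (Ψ *ᵥ b)) := by
    rw [Matrix.mulVec_add, Matrix.mulVec_sub]
    simp only [dotProduct, Finset.mul_sum, ← Finset.sum_sub_distrib]
    apply Finset.sum_congr rfl
    intro j _
    simp only [Pi.add_apply, Pi.sub_apply]
    ring
  nlinarith [hid, h1, h2]

lemma eq_zero_of_sumsq {a : Fin p → ℝ} (ha : ∑ i, a i ^ 2 = 0) : a = 0 := by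
  funext i
  have := (Finset.sum_eq_zero_iff_of_nonneg (fun i _ => sq_nonneg (a i))).1 ha i (Finset.mem_univ i)
  exact pow_eq_zero_iff (by norm_num) |>.1 this

lemma supp_smul {c : ℝ} (hc : c ≠ 0) (a : Fin p → ℝ) : supp (c • a) = supp a := by
  ext i; simp [supp, hc]

lemma cross {Ψ : Matrix (Fin n) (Fin p) ℝ} {k : ℕ} {δ : ℝ} (hδ : 0 ≤ δ)
    (hRIP : HasRIP Ψ k δ)
    (a b : Fin p → ℝ) (hcard : (supp a).card + (supp b).card ≤ k)
    (hdisj : ∀ i, a i = 0 ∨ b i = 0) :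
    |(Ψ *ᵥ a) ⬝ᵥ (Ψ *ᵥ b)| ≤ δ * Real.sqrt (∑ i, a i ^ 2) * Real.sqrt (∑ i, b i ^ 2) := by
  have hsa : (0:ℝ) ≤ ∑ i, a i ^ 2 := Finset.sum_nonneg fun i _ => sq_nonneg _
  have hsb : (0:ℝ) ≤ ∑ i, b i ^ 2 := Finset.sum_nonneg fun i _ => sq_nonneg _
  rcases eq_or_lt_of_le hsa with h0 | hpa
  · rw [eq_zero_of_sumsq h0.symm]
    simp [Real.sqrt_nonneg, mul_nonneg, hδ]
  rcases eq_or_lt_of_le hsb with h0 | hpb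
  · rw [eq_zero_of_sumsq h0.symm]
    simp [Real.sqrt_nonneg, mul_nonneg, hδ]
  set sa := Real.sqrt (∑ i, a i ^ 2) with hsa'
  set sb := Real.sqrt (∑ i, b i ^ 2) with hsb'
  have hsap : 0 < sa := Real.sqrt_pos.2 hpa
  have hsbp : 0 < sb := Real.sqrt_pos.2 hpb
  have hsaq : sa ^ 2 = ∑ i, a i ^ 2 := Real.sq_sqrt hsa
  have hsbq : sb ^ 2 = ∑ i, b i ^ 2 := Real.sq_sqrt hsb
  set c := Real.sqrt (sb / sa) with hc'
  have hcp : 0 < c := Real.sqrt_pos.2 (div_pos hsbp hsap)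
  have hcq : c ^ 2 = sb / sa := Real.sq_sqrt (le_of_lt (div_pos hsbp hsap))
  have key : ∀ a' b' : Fin p → ℝ, (∀ i, a' i = 0 ∨ b' i = 0) →
      (supp a').card + (supp b').card ≤ k →
      (Ψ *ᵥ a') ⬝ᵥ (Ψ *ᵥ b') ≤ δ / 2 * (∑ i, a' i ^ 2 + ∑ i, b' i ^ 2) :=
    fun a' b' h1 h2 => cross' hRIP a' b' h2 h1
  have hsum1 : ∑ i, (c • a) i ^ 2 = sa * sb := by
    simp only [Pi.smul_apply, smul_eq_mul, mul_pow, ← Finset.mul_sum]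
    rw [hcq]; rw [← hsaq]; field_simp
  have hsum2 : ∑ i, (c⁻¹ • b) i ^ 2 = sa * sb := by
    simp only [Pi.smul_apply, smul_eq_mul, mul_pow, ← Finset.mul_sum]
    rw [inv_pow, hcq, ← hsbq]; field_simp
  have hdot : ∀ s : ℝ, (Ψ *ᵥ (c • a)) ⬝ᵥ (Ψ *ᵥ (s • (c⁻¹ • b))) = s * ((Ψ *ᵥ a) ⬝ᵥ (Ψ *ᵥ b)) := by
    intro s
    rw [Matrix.mulVec_smul, Matrix.mulVec_smul, Matrix.mulVec_smul,
      smul_dotProduct, dotProduct_smul, dotProduct_smul]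
    simp only [smul_eq_mul]
    field_simp
  have hcards : ∀ s : ℝ, s ≠ 0 → (supp (c • a)).card + (supp (s • (c⁻¹ • b))).card ≤ k := by
    intro s hs
    rw [supp_smul (ne_of_gt hcp), supp_smul hs, supp_smul (inv_ne_zero (ne_of_gt hcp))]
    exact hcard
  have hdisj' : ∀ s : ℝ, ∀ i, (c • a) i = 0 ∨ (s • (c⁻¹ • b)) i = 0 := by
    intro s i
    rcases hdisj i with h | h
    · left; simp [h]
    · right; simp [h]
  have hup := key _ _ (hdisj' 1) (hcards 1 one_ne_zero)
  have hdn := key _ _ (hdisj' (-1)) (hcards (-1) (by norm_num))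
  have hsum2'' : ∑ i, ((1:ℝ) • (c⁻¹ • b)) i ^ 2 = sa * sb := by simpa using hsum2
  rw [hdot 1, one_mul, hsum1, hsum2''] at hup
  rw [hdot (-1)] at hdn
  have hsum2' : ∑ i, ((-1 : ℝ) • (c⁻¹ • b)) i ^ 2 = sa * sb := by
    simpa using hsum2
  rw [hsum1, hsum2'] at hdn
  rw [abs_le]
  constructor <;> nlinarith [hup, hdn]

lemma gram_isUnit {Ψ : Matrix (Fin n) (Fin p) ℝ} {k : ℕ} {δ : ℝ} (hδ1 : δ < 1)
    (hRIP : HasRIP Ψ k δ) (A : Finset (Fin p)) (hcard : A.card ≤ k) :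
    IsUnit ((colSub Ψ A)ᵀ * colSub Ψ A).det := by
  have hPD : ((colSub Ψ A)ᵀ * colSub Ψ A).PosDef := by
    rw [Matrix.posDef_iff_dotProduct_mulVec]
    constructor
    · have := Matrix.isHermitian_conjTranspose_mul_self (colSub Ψ A)
      simpa using this
    · intro w hw
      have hsupp : (Finset.univ.filter (fun i => ext A w i ≠ 0)).card ≤ k := by
        refine le_trans (Finset.card_le_card ?_) hcard
        intro i hi
        simp only [Finset.mem_filter] at hi
        by_contra hc
        exact hi.2 (ext_of_not_mem w hc)
      have h1 := (hRIP (ext A w) hsupp).1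
      have hdot : star w ⬝ᵥ (((colSub Ψ A)ᵀ * colSub Ψ A) *ᵥ w)
          = ∑ j, (Ψ *ᵥ ext A w) j ^ 2 := by
        rw [← Matrix.mulVec_mulVec, Matrix.dotProduct_mulVec, Matrix.vecMul_transpose]
        rw [ext_mulVec]
        simp [dotProduct, sq]
      rw [hdot]
      have hwpos : 0 < ∑ i : {i // i ∈ A}, w i ^ 2 := by
        rcases Function.ne_iff.1 hw with ⟨i, hi⟩
        simp only [Pi.zero_apply] at hi
        exact Finset.sum_pos' (fun i _ => sq_nonneg _)
          ⟨i, Finset.mem_univ i, lt_of_le_of_ne (sq_nonneg _) (Ne.symm (pow_ne_zero 2 hi))⟩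
      calc (0:ℝ) < (1 - δ) * (∑ i, ext A w i ^ 2) := by
            rw [ext_sumsq]; exact mul_pos (by linarith) hwpos
        _ ≤ _ := h1
  have := hPD.det_pos
  exact isUnit_iff_ne_zero.2 (ne_of_gt this)

lemma residual_orth {Ψ : Matrix (Fin n) (Fin p) ℝ} {k : ℕ} {δ : ℝ} (hδ1 : δ < 1)
    (hRIP : HasRIP Ψ k δ) (A : Finset (Fin p)) (hcard : A.card ≤ k)
    (y : Fin n → ℝ) (d : Fin p → ℝ)
    (xA : {i // i ∈ A} → ℝ)
    (hxA : xA = ((colSub Ψ A)ᵀ * colSub Ψ A)⁻¹ *ᵥ ((colSub Ψ A)ᵀ *ᵥ y - fun j => d j.1)) :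
    ∀ j ∈ A, (Ψᵀ *ᵥ (y - colSub Ψ A *ᵥ xA)) j = d j := by
  intro j hj
  have hG := gram_isUnit hδ1 hRIP A hcard
  have key : (colSub Ψ A)ᵀ *ᵥ (y - colSub Ψ A *ᵥ xA) = fun j => d j.1 := by
    rw [Matrix.mulVec_sub, hxA, Matrix.mulVec_mulVec, Matrix.mulVec_mulVec,
      Matrix.mul_nonsing_inv _ hG]
    simp [Matrix.mulVec_sub, Matrix.one_mulVec]
  have := congrFun key ⟨j, hj⟩
  simp only at this
  rw [← this]
  show ∑ i, Ψᵀ j i * _ = ∑ i, (colSub Ψ A)ᵀ (⟨j, hj⟩ : {i // i ∈ A}) i * _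
  exact Finset.sum_congr rfl fun i _ => by simp [colSub, Matrix.transpose]

end Stmt9

/-- bound on the dual variable outside the true support (noise-free setting). -/
theorem stmt_9 {n p : ℕ} (Ψ : Matrix (Fin n) (Fin p) ℝ)
    (xdag : Fin p → ℝ) (Adag : Finset (Fin p))
    (hAdag : Adag = Finset.univ.filter (fun i => xdag i ≠ 0))
    (T : ℕ) (hT : T = Adag.card)
    (y : Fin n → ℝ) (hy : y = Ψ *ᵥ xdag)
    (δ : ℝ) (hδ0 : 0 < δ) (hδ1 : δ < 1)
    (hRIP : HasRIP Ψ (T + 1) δ)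
    (lam : ℝ) (hlam : 0 < lam)
    (A : Finset (Fin p)) (hA : A ⊆ Adag)
    (B : Finset (Fin p)) (hB : B = Adag \ A)
    (d : Fin p → ℝ) (hdA : ∀ i ∈ A, |d i| = lam)
    (xA : {i // i ∈ A} → ℝ)
    (hxA : xA = ((colSub Ψ A)ᵀ * colSub Ψ A)⁻¹ *ᵥ ((colSub Ψ A)ᵀ *ᵥ y - fun j => d j.1))
    (hdI : ∀ i ∉ A, d i = (Ψᵀ *ᵥ (y - colSub Ψ A *ᵥ xA)) i)
 :
    ∀ i ∉ Adag, |d i| ≤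
      δ / (1 - δ) * (Real.sqrt (∑ i ∈ B, xdag i ^ 2) + Real.sqrt (∑ i ∈ A, d i ^ 2)) := by
  intro i hi
  have hδ' : (0:ℝ) < 1 - δ := by linarith
  have hTA : A.card ≤ T := hT ▸ Finset.card_le_card hA
  have hTAk : A.card ≤ T + 1 := le_trans hTA (Nat.le_succ T)
  have hABcard : A.card + B.card = T := by
    rw [hB, Finset.card_sdiff_of_subset hA, hT]
    have := Finset.card_le_card hA
    omega
  set xAe := Stmt9.ext A xA with hxAe
  set v : Fin p → ℝ := xdag - xAe with hv
  set bvec : Fin p → ℝ := fun j => if j ∈ B then xdag j else 0 with hbv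
  set avec : Fin p → ℝ := v - bvec with hav
  have hxdag0 : ∀ j ∉ Adag, xdag j = 0 := by
    intro j hj
    rw [hAdag] at hj
    simp only [Finset.mem_filter, Finset.mem_univ, true_and, not_not] at hj
    exact hj
  have hvA : ∀ j ∉ Adag, v j = 0 := by
    intro j hj
    have hjA : j ∉ A := fun h => hj (hA h)
    simp [hv, hxAe, hxdag0 j hj, Stmt9.ext_of_not_mem xA hjA]
  have hbvec0 : ∀ j ∉ B, bvec j = 0 := by
    intro j hj; simp [hbv, hj]
  have havec0 : ∀ j ∉ A, avec j = 0 := by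
    intro j hj
    by_cases hjB : j ∈ B
    · have hjA : j ∉ A := hj
      simp [hav, hv, hbv, hjB, hxAe, Stmt9.ext_of_not_mem xA hjA]
    · have hjdag : j ∉ Adag := by
        intro h
        exact hjB (by rw [hB]; exact Finset.mem_sdiff.2 ⟨h, hj⟩)
      simp [hav, hvA j hjdag, hbvec0 j hjB]
  have hvab : v = avec + bvec := by simp [hav]
  have hdisjAB : ∀ j, avec j = 0 ∨ bvec j = 0 := by
    intro j
    by_cases hjA : j ∈ A
    · right
      apply hbvec0
      rw [hB]
      simp [hjA]
    · left; exact havec0 j hjA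
  have hsa_card : (Stmt9.supp avec).card ≤ A.card :=
    Finset.card_le_card (Stmt9.supp_subset havec0)
  have hsb_card : (Stmt9.supp bvec).card ≤ B.card :=
    Finset.card_le_card (Stmt9.supp_subset hbvec0)
  have hsv_card : (Stmt9.supp v).card ≤ T := by
    refine le_trans (Finset.card_le_card (Stmt9.supp_subset hvA)) (le_of_eq hT.symm)
  -- residual
  have horth := Stmt9.residual_orth hδ1 hRIP A hTAk y d xA hxA
  have hr : y - colSub Ψ A *ᵥ xA = Ψ *ᵥ v := by
    rw [hy, ← Stmt9.ext_mulVec Ψ A xA, ← Matrix.mulVec_sub]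
  -- quantities
  set α := Real.sqrt (∑ j, avec j ^ 2) with hα'
  set β := Real.sqrt (∑ j ∈ B, xdag j ^ 2) with hβ'
  set D := Real.sqrt (∑ j ∈ A, d j ^ 2) with hD'
  have hαnn : 0 ≤ α := Real.sqrt_nonneg _
  have hβnn : 0 ≤ β := Real.sqrt_nonneg _
  have hDnn : 0 ≤ D := Real.sqrt_nonneg _
  have hbsum : ∑ j, bvec j ^ 2 = ∑ j ∈ B, xdag j ^ 2 := by
    rw [← Finset.sum_subset B.subset_univ (fun x _ hx => by simp [hbvec0 x hx])]
    exact Finset.sum_congr rfl fun j hj => by simp [hbv, hj]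
  have hβq : β ^ 2 = ∑ j, bvec j ^ 2 := by
    rw [hbsum]; exact Real.sq_sqrt (Finset.sum_nonneg fun j _ => sq_nonneg _)
  have hαq : α ^ 2 = ∑ j, avec j ^ 2 :=
    Real.sq_sqrt (Finset.sum_nonneg fun j _ => sq_nonneg _)
  -- Step B : (1-δ) α² ≤ α D + δ α β
  have h1 := (hRIP avec (le_trans (le_trans hsa_card hTA) (Nat.le_succ T))).1
  have hsplit : (Ψ *ᵥ avec) ⬝ᵥ (Ψ *ᵥ v)
      = ∑ j, (Ψ *ᵥ avec) j ^ 2 + (Ψ *ᵥ avec) ⬝ᵥ (Ψ *ᵥ bvec) := by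
    rw [hvab, Matrix.mulVec_add, dotProduct_add]
    congr 1
    simp [dotProduct, sq]
  rw [hr] at horth
  have hterm1 : (Ψ *ᵥ avec) ⬝ᵥ (Ψ *ᵥ v) ≤ α * D := by
    have heq : (Ψ *ᵥ avec) ⬝ᵥ (Ψ *ᵥ v) = avec ⬝ᵥ (Ψᵀ *ᵥ (Ψ *ᵥ v)) := by
      rw [Matrix.dotProduct_mulVec avec Ψᵀ, Matrix.vecMul_transpose]
    rw [heq]
    have heq2 : avec ⬝ᵥ (Ψᵀ *ᵥ (Ψ *ᵥ v)) = ∑ j ∈ A, avec j * d j := by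
      show ∑ j, avec j * (Ψᵀ *ᵥ (Ψ *ᵥ v)) j = _
      rw [← Finset.sum_subset A.subset_univ (fun x _ hx => by rw [havec0 x hx, zero_mul])]
      exact Finset.sum_congr rfl fun j hj => by rw [horth j hj]
    rw [heq2]
    have hCS := Finset.sum_mul_sq_le_sq_mul_sq A avec d
    have hA2 : ∑ j ∈ A, avec j ^ 2 = ∑ j, avec j ^ 2 :=
      Finset.sum_subset A.subset_univ (fun x _ hx => by rw [havec0 x hx]; ring)
    calc ∑ j ∈ A, avec j * d j ≤ |∑ j ∈ A, avec j * d j| := le_abs_self _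
      _ = Real.sqrt ((∑ j ∈ A, avec j * d j) ^ 2) := (Real.sqrt_sq_eq_abs _).symm
      _ ≤ Real.sqrt ((∑ j ∈ A, avec j ^ 2) * ∑ j ∈ A, d j ^ 2) := Real.sqrt_le_sqrt hCS
      _ = α * D := by
          rw [hA2, Real.sqrt_mul (Finset.sum_nonneg fun j _ => sq_nonneg _)]
  have hterm2 : |(Ψ *ᵥ avec) ⬝ᵥ (Ψ *ᵥ bvec)| ≤ δ * (α * β) := by
    have hc := Stmt9.cross hδ0.le hRIP avec bvec
      (by omega) hdisjAB
    calc |(Ψ *ᵥ avec) ⬝ᵥ (Ψ *ᵥ bvec)|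
        ≤ δ * Real.sqrt (∑ j, avec j ^ 2) * Real.sqrt (∑ j, bvec j ^ 2) := hc
      _ = δ * (α * β) := by rw [hbsum]; ring
  have hB1 : (1 - δ) * α ^ 2 ≤ α * D + δ * (α * β) := by
    rw [hαq]
    have : ∑ j, (Ψ *ᵥ avec) j ^ 2 = (Ψ *ᵥ avec) ⬝ᵥ (Ψ *ᵥ v) - (Ψ *ᵥ avec) ⬝ᵥ (Ψ *ᵥ bvec) := by
      rw [hsplit]; ring
    rw [this] at h1
    have := neg_abs_le ((Ψ *ᵥ avec) ⬝ᵥ (Ψ *ᵥ bvec))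
    linarith [hterm1, hterm2]
  have hαbound : (1 - δ) * α ≤ D + δ * β := by
    rcases eq_or_lt_of_le hαnn with h0 | hαp
    · rw [← h0, mul_zero]; positivity
    · have h2 : ((1 - δ) * α) * α ≤ (D + δ * β) * α := by linarith [hB1]
      exact le_of_mul_le_mul_right h2 hαp
  -- Step D
  have hiA : i ∉ A := fun h => hi (hA h)
  have hdi : d i = (Ψ *ᵥ Pi.single i 1) ⬝ᵥ (Ψ *ᵥ v) := by
    rw [hdI i hiA, hr]
    generalize Ψ *ᵥ v = w
    rw [Matrix.mulVec_single]
    show ∑ k, Ψᵀ i k * w k = ∑ k, (Ψ k i * 1) * w k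
    exact Finset.sum_congr rfl fun k _ => by simp [Matrix.transpose_apply]
  have hsingle : ∑ j, (Pi.single i 1 : Fin p → ℝ) j ^ 2 = 1 := by
    simp [Pi.single_apply]
  have hsingle_card : (Stmt9.supp (Pi.single i 1 : Fin p → ℝ)).card ≤ 1 := by
    have : Stmt9.supp (Pi.single i 1 : Fin p → ℝ) ⊆ {i} := by
      apply Stmt9.supp_subset
      intro j hj
      simp only [Finset.mem_singleton] at hj
      exact Pi.single_eq_of_ne hj 1
    simpa using Finset.card_le_card this
  have hdisj2 : ∀ j, (Pi.single i 1 : Fin p → ℝ) j = 0 ∨ v j = 0 := by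
    intro j
    by_cases hji : j = i
    · right; rw [hji]; exact hvA i hi
    · left; exact Pi.single_eq_of_ne hji 1
  have hcross2 := Stmt9.cross hδ0.le hRIP (Pi.single i 1) v (by omega) hdisj2
  rw [hsingle, Real.sqrt_one, mul_one] at hcross2
  have hvsum : ∑ j, v j ^ 2 = α ^ 2 + β ^ 2 := by
    rw [hαq, hβq, ← Stmt9.sum_sq_of_disj hdisjAB]
    exact Finset.sum_congr rfl fun j _ => by rw [hvab]; rfl
  have hsv : Real.sqrt (∑ j, v j ^ 2) ≤ α + β := by
    rw [hvsum]
    calc Real.sqrt (α ^ 2 + β ^ 2) ≤ Real.sqrt ((α + β) ^ 2) :=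
          Real.sqrt_le_sqrt (by nlinarith [mul_nonneg hαnn hβnn])
      _ = α + β := Real.sqrt_sq (by linarith)
  have hfin : |d i| ≤ δ * (α + β) := by
    rw [hdi]
    calc |(Ψ *ᵥ Pi.single i 1) ⬝ᵥ (Ψ *ᵥ v)| ≤ δ * Real.sqrt (∑ j, v j ^ 2) := hcross2
      _ ≤ δ * (α + β) := mul_le_mul_of_nonneg_left hsv hδ0.le
  have hp1 := mul_le_mul_of_nonneg_left hαbound hδ0.le
  have hp2 := mul_le_mul_of_nonneg_left hfin hδ'.le
  rw [div_mul_eq_mul_div, le_div_iff₀ hδ']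
  linarith [hp1, hp2]
end

section
/- In the noise-free setting, let A ⊊ A† with B = A†∖A, suppose Ψ satisfies RIP of order T+1 with constant δ < 1, let d ∈ ℝ^p have |d_i| = λ for all i ∈ A, let x_A = (Ψ_AᵗΨ_A)⁻¹(Ψ_Aᵗ y − d_A), and define d_i = Ψ_iᵗ(y − Ψ_A x_A) for i ∉ A. Let i_A be an index maximizing |x†_i| over i ∈ A^c (so i_A ∈ B). Then |d_{i_A}| ≥ |x†_{i_A}| − (δ/(1−δ))(‖x†_B‖₂ + ‖d_A‖₂). -/
open Matrix

lemma ext_mulVec {n p : ℕ} (Ψ : Matrix (Fin n) (Fin p) ℝ) (A : Finset (Fin p)) (z : {i // i ∈ A} → ℝ) :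
    Ψ *ᵥ (fun i => if h : i ∈ A then z ⟨i, h⟩ else 0) = colSub Ψ A *ᵥ z := by
  funext j
  simp only [Matrix.mulVec, dotProduct, colSub, Matrix.of_apply]
  have h1 : ∀ i : Fin p, Ψ j i * (if h : i ∈ A then z ⟨i, h⟩ else 0)
      = (if h : i ∈ A then Ψ j i * z ⟨i, h⟩ else 0) := by
    intro i; by_cases h : i ∈ A <;> simp [h]
  rw [Finset.sum_congr rfl (fun i _ => h1 i)]
  rw [← Finset.sum_subset (Finset.subset_univ A) (fun i _ hi => by simp [hi])]
  rw [← Finset.sum_attach A (fun i => if h : i ∈ A then Ψ j i * z ⟨i, h⟩ else 0)]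
  rw [Finset.univ_eq_attach]
  exact Finset.sum_congr rfl (fun x _ => by simp [x.2])

lemma dot_gram {n : ℕ} {ι : Type*} [Fintype ι] (M : Matrix (Fin n) ι ℝ) (z : ι → ℝ) :
    z ⬝ᵥ ((Mᵀ * M) *ᵥ z) = ∑ k, (M *ᵥ z) k ^ 2 := by
  rw [← Matrix.mulVec_mulVec, Matrix.dotProduct_mulVec, Matrix.vecMul_transpose]
  simp [dotProduct, sq]

lemma rip_inner_half {n p k : ℕ} {Ψ : Matrix (Fin n) (Fin p) ℝ} {δ : ℝ}
    (hRIP : HasRIP Ψ k δ) (v w : Fin p → ℝ)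
    (hc : ((Finset.univ.filter fun i => v i ≠ 0) ∪ (Finset.univ.filter fun i => w i ≠ 0)).card ≤ k) :
    |(∑ j, (Ψ *ᵥ v) j * (Ψ *ᵥ w) j) - ∑ i, v i * w i|
      ≤ δ / 2 * ((∑ i, v i ^ 2) + ∑ i, w i ^ 2) := by
  have hsub : ∀ (u : Fin p → ℝ), (∀ i, v i = 0 → w i = 0 → u i = 0) →
      (Finset.univ.filter fun i => u i ≠ 0).card ≤ k := by
    intro u hu
    refine le_trans (Finset.card_le_card ?_) hc
    intro i hi
    simp only [Finset.mem_filter, Finset.mem_union, Finset.mem_univ, true_and] at hi ⊢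
    by_contra h
    push_neg at h
    exact hi (hu i h.1 h.2)
  have h1 := hRIP (v + w) (hsub _ (fun i h1 h2 => by simp [Pi.add_apply, h1, h2]))
  have h2 := hRIP (v - w) (hsub _ (fun i h1 h2 => by simp [Pi.sub_apply, h1, h2]))
  have ev : ∑ i, (v + w) i ^ 2 = (∑ i, v i ^ 2) + 2 * (∑ i, v i * w i) + ∑ i, w i ^ 2 := by
    rw [Finset.sum_congr rfl (fun i _ => show (v + w) i ^ 2
      = v i ^ 2 + (2 * (v i * w i) + w i ^ 2) by simp [Pi.add_apply]; ring),
      Finset.sum_add_distrib, Finset.sum_add_distrib, ← Finset.mul_sum]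
    ring
  have evm : ∑ i, (v - w) i ^ 2 = (∑ i, v i ^ 2) - 2 * (∑ i, v i * w i) + ∑ i, w i ^ 2 := by
    rw [Finset.sum_congr rfl (fun i _ => show (v - w) i ^ 2
      = v i ^ 2 + ((-2) * (v i * w i) + w i ^ 2) by simp [Pi.sub_apply]; ring),
      Finset.sum_add_distrib, Finset.sum_add_distrib, ← Finset.mul_sum]
    ring
  have eΨ : ∑ j, (Ψ *ᵥ (v + w)) j ^ 2
      = (∑ j, (Ψ *ᵥ v) j ^ 2) + 2 * (∑ j, (Ψ *ᵥ v) j * (Ψ *ᵥ w) j) + ∑ j, (Ψ *ᵥ w) j ^ 2 := by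
    rw [Matrix.mulVec_add]
    rw [Finset.sum_congr rfl (fun j _ => show (Ψ *ᵥ v + Ψ *ᵥ w) j ^ 2
      = (Ψ *ᵥ v) j ^ 2 + (2 * ((Ψ *ᵥ v) j * (Ψ *ᵥ w) j) + (Ψ *ᵥ w) j ^ 2) by
        simp [Pi.add_apply]; ring),
      Finset.sum_add_distrib, Finset.sum_add_distrib, ← Finset.mul_sum]
    ring
  have eΨm : ∑ j, (Ψ *ᵥ (v - w)) j ^ 2
      = (∑ j, (Ψ *ᵥ v) j ^ 2) - 2 * (∑ j, (Ψ *ᵥ v) j * (Ψ *ᵥ w) j) + ∑ j, (Ψ *ᵥ w) j ^ 2 := by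
    rw [Matrix.mulVec_sub]
    rw [Finset.sum_congr rfl (fun j _ => show (Ψ *ᵥ v - Ψ *ᵥ w) j ^ 2
      = (Ψ *ᵥ v) j ^ 2 + ((-2) * ((Ψ *ᵥ v) j * (Ψ *ᵥ w) j) + (Ψ *ᵥ w) j ^ 2) by
        simp [Pi.sub_apply]; ring),
      Finset.sum_add_distrib, Finset.sum_add_distrib, ← Finset.mul_sum]
    ring
  obtain ⟨h1l, h1u⟩ := h1
  obtain ⟨h2l, h2u⟩ := h2
  rw [ev, eΨ] at h1l h1u
  rw [evm, eΨm] at h2l h2u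
  rw [abs_le]
  constructor <;> nlinarith

lemma rip_inner {n p k : ℕ} {Ψ : Matrix (Fin n) (Fin p) ℝ} {δ : ℝ} (hδ : 0 ≤ δ)
    (hRIP : HasRIP Ψ k δ) (v w : Fin p → ℝ)
    (hc : ((Finset.univ.filter fun i => v i ≠ 0) ∪ (Finset.univ.filter fun i => w i ≠ 0)).card ≤ k) :
    |(∑ j, (Ψ *ᵥ v) j * (Ψ *ᵥ w) j) - ∑ i, v i * w i|
      ≤ δ * Real.sqrt (∑ i, v i ^ 2) * Real.sqrt (∑ i, w i ^ 2) := by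
  have hvnn : (0:ℝ) ≤ ∑ i, v i ^ 2 := Finset.sum_nonneg fun i _ => sq_nonneg _
  have hwnn : (0:ℝ) ≤ ∑ i, w i ^ 2 := Finset.sum_nonneg fun i _ => sq_nonneg _
  by_cases hv : ∑ i, v i ^ 2 = 0
  · have hv0 : v = 0 := by
      funext i
      have := (Finset.sum_eq_zero_iff_of_nonneg (fun i _ => sq_nonneg (v i))).1 hv i (Finset.mem_univ i)
      exact pow_eq_zero_iff (by norm_num) |>.1 this
    simp [hv0, hv, Matrix.mulVec_zero]
  by_cases hw : ∑ i, w i ^ 2 = 0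
  · have hw0 : w = 0 := by
      funext i
      have := (Finset.sum_eq_zero_iff_of_nonneg (fun i _ => sq_nonneg (w i))).1 hw i (Finset.mem_univ i)
      exact pow_eq_zero_iff (by norm_num) |>.1 this
    simp [hw0, hw, Matrix.mulVec_zero]
  have hvp : (0:ℝ) < ∑ i, v i ^ 2 := lt_of_le_of_ne hvnn (Ne.symm hv)
  have hwp : (0:ℝ) < ∑ i, w i ^ 2 := lt_of_le_of_ne hwnn (Ne.symm hw)
  set α := Real.sqrt (∑ i, v i ^ 2) with hα
  set β := Real.sqrt (∑ i, w i ^ 2) with hβ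
  have hαp : 0 < α := Real.sqrt_pos.2 hvp
  have hβp : 0 < β := Real.sqrt_pos.2 hwp
  have hα2 : α ^ 2 = ∑ i, v i ^ 2 := Real.sq_sqrt hvnn
  have hβ2 : β ^ 2 = ∑ i, w i ^ 2 := Real.sq_sqrt hwnn
  set t := Real.sqrt (β / α) with ht
  have htp : 0 < t := Real.sqrt_pos.2 (div_pos hβp hαp)
  have ht2 : t ^ 2 = β / α := Real.sq_sqrt (le_of_lt (div_pos hβp hαp))
  have hcard' : ((Finset.univ.filter fun i => (fun i => t * v i) i ≠ 0)
      ∪ (Finset.univ.filter fun i => (fun i => t⁻¹ * w i) i ≠ 0)).card ≤ k := by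
    have e1 : (Finset.univ.filter fun i => (fun i => t * v i) i ≠ 0)
        = Finset.univ.filter fun i => v i ≠ 0 :=
      Finset.filter_congr fun i _ => by simp [mul_ne_zero_iff, htp.ne']
    have e2 : (Finset.univ.filter fun i => (fun i => t⁻¹ * w i) i ≠ 0)
        = Finset.univ.filter fun i => w i ≠ 0 :=
      Finset.filter_congr fun i _ => by simp [mul_ne_zero_iff, inv_ne_zero htp.ne']
    rw [e1, e2]; exact hc
  have key := rip_inner_half hRIP (fun i => t * v i) (fun i => t⁻¹ * w i) hcard'
  have eΨv : Ψ *ᵥ (fun i => t * v i) = fun j => t * (Ψ *ᵥ v) j := by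
    funext j; simp [Matrix.mulVec, dotProduct, Finset.mul_sum]; exact Finset.sum_congr rfl fun i _ => by ring
  have eΨw : Ψ *ᵥ (fun i => t⁻¹ * w i) = fun j => t⁻¹ * (Ψ *ᵥ w) j := by
    funext j; simp [Matrix.mulVec, dotProduct, Finset.mul_sum]; exact Finset.sum_congr rfl fun i _ => by ring
  rw [eΨv, eΨw] at key
  have e3 : ∑ j, (t * (Ψ *ᵥ v) j) * (t⁻¹ * (Ψ *ᵥ w) j) = ∑ j, (Ψ *ᵥ v) j * (Ψ *ᵥ w) j :=
    Finset.sum_congr rfl fun j _ => by field_simp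
  have e4 : ∑ i, (fun i => t * v i) i * (fun i => t⁻¹ * w i) i = ∑ i, v i * w i :=
    Finset.sum_congr rfl fun i _ => by field_simp
  have e5 : ∑ i, (fun i => t * v i) i ^ 2 = t ^ 2 * ∑ i, v i ^ 2 := by
    rw [Finset.mul_sum]; exact Finset.sum_congr rfl fun i _ => by ring
  have e6 : ∑ i, (fun i => t⁻¹ * w i) i ^ 2 = (t ^ 2)⁻¹ * ∑ i, w i ^ 2 := by
    rw [Finset.mul_sum]; exact Finset.sum_congr rfl fun i _ => by
      rw [mul_pow, inv_pow]
  rw [e3, e4, e5, e6, ht2] at key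
  have efin : δ / 2 * (β / α * ∑ i, v i ^ 2 + (β / α)⁻¹ * ∑ i, w i ^ 2) = δ * α * β := by
    rw [← hα2, ← hβ2]; field_simp; ring
  rw [efin] at key
  exact key

set_option maxHeartbeats 1000000 in
/-- lower bound on the dual variable at the largest missed component (noise-free setting). -/
theorem stmt_10 {n p : ℕ} (Ψ : Matrix (Fin n) (Fin p) ℝ)
    (xdag : Fin p → ℝ) (Adag : Finset (Fin p))
    (hAdag : Adag = Finset.univ.filter (fun i => xdag i ≠ 0))
    (T : ℕ) (hT : T = Adag.card)
    (y : Fin n → ℝ) (hy : y = Ψ *ᵥ xdag)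
    (δ : ℝ) (hδ0 : 0 < δ) (hδ1 : δ < 1)
    (hRIP : HasRIP Ψ (T + 1) δ)
    (lam : ℝ) (hlam : 0 < lam)
    (A : Finset (Fin p)) (hA : A ⊂ Adag)
    (B : Finset (Fin p)) (hB : B = Adag \ A)
    (d : Fin p → ℝ) (hdA : ∀ i ∈ A, |d i| = lam)
    (xA : {i // i ∈ A} → ℝ)
    (hxA : xA = ((colSub Ψ A)ᵀ * colSub Ψ A)⁻¹ *ᵥ ((colSub Ψ A)ᵀ *ᵥ y - fun j => d j.1))
    (hdI : ∀ i ∉ A, d i = (Ψᵀ *ᵥ (y - colSub Ψ A *ᵥ xA)) i)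
    (iA : Fin p) (hiA : iA ∉ A) (hmax : ∀ j ∉ A, |xdag j| ≤ |xdag iA|) :
    |xdag iA| - δ / (1 - δ) * (Real.sqrt (∑ i ∈ B, xdag i ^ 2) + Real.sqrt (∑ i ∈ A, d i ^ 2))
      ≤ |d iA| := by
  have hAsub : A ⊆ Adag := hA.1
  have hcardA : A.card ≤ T := by rw [hT]; exact le_of_lt (Finset.card_lt_card hA)
  have hδ' : (0:ℝ) < 1 - δ := by linarith
  -- the residual vector u
  set ex : Fin p → ℝ := fun i => if h : i ∈ A then xA ⟨i, h⟩ else 0 with hex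
  set u : Fin p → ℝ := xdag - ex with hu
  have hui : ∀ i, u i = xdag i - ex i := fun i => rfl
  have hexA : ∀ i, i ∉ A → ex i = 0 := by intro i hi; simp [hex, hi]
  -- Gram matrix invertibility
  have hGdet : IsUnit ((colSub Ψ A)ᵀ * colSub Ψ A).det := by
    rw [isUnit_iff_ne_zero]
    intro hdet
    obtain ⟨z, hz0, hz⟩ := (Matrix.exists_mulVec_eq_zero_iff).2 hdet
    set ez : Fin p → ℝ := fun i => if h : i ∈ A then z ⟨i, h⟩ else 0 with hez
    have hzero : ∑ k, (colSub Ψ A *ᵥ z) k ^ 2 = 0 := by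
      rw [← dot_gram, hz]; simp
    have hcard : (Finset.univ.filter fun i => ez i ≠ 0).card ≤ T + 1 := by
      refine le_trans (le_trans (Finset.card_le_card ?_) hcardA) (Nat.le_succ T)
      intro i hi
      simp only [Finset.mem_filter, Finset.mem_univ, true_and] at hi
      by_contra hiA'
      exact hi (by simp [hez, hiA'])
    have hlow := (hRIP ez hcard).1
    rw [ext_mulVec Ψ A z, hzero] at hlow
    have hnn : (0:ℝ) ≤ ∑ i, ez i ^ 2 := Finset.sum_nonneg fun i _ => sq_nonneg _
    have hsum0 : ∑ i, ez i ^ 2 = 0 := by nlinarith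
    apply hz0
    funext j
    have := (Finset.sum_eq_zero_iff_of_nonneg (fun i _ => sq_nonneg (ez i))).1 hsum0 j.1 (Finset.mem_univ _)
    have : ez j.1 = 0 := pow_eq_zero_iff (by norm_num) |>.1 this
    simpa [hez, j.2] using this
  -- residual identity
  have hr : Ψ *ᵥ u = y - colSub Ψ A *ᵥ xA := by
    rw [hu, Matrix.mulVec_sub, hy, hex, ext_mulVec Ψ A xA]
  -- normal equations
  have hnormal : ((colSub Ψ A)ᵀ * colSub Ψ A) *ᵥ xA
      = (colSub Ψ A)ᵀ *ᵥ y - fun j => d j.1 := by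
    rw [hxA, Matrix.mulVec_mulVec, Matrix.mul_nonsing_inv _ hGdet, Matrix.one_mulVec]
  have hMr : (colSub Ψ A)ᵀ *ᵥ (y - colSub Ψ A *ᵥ xA) = fun j => d j.1 := by
    rw [Matrix.mulVec_sub, Matrix.mulVec_mulVec, hnormal]
    simp
  have hd : ∀ i, (Ψᵀ *ᵥ (Ψ *ᵥ u)) i = d i := by
    intro i
    rw [hr]
    by_cases hi : i ∈ A
    · have h2 := congrFun hMr ⟨i, hi⟩
      simp only [Matrix.mulVec, dotProduct, colSub, Matrix.transpose_apply, Matrix.of_apply] at h2 ⊢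
      exact h2
    · exact (hdI i hi).symm
  -- iA ∈ B
  obtain ⟨j0, hj0d, hj0A⟩ := Finset.exists_of_ssubset hA
  have hxj0 : xdag j0 ≠ 0 := by
    rw [hAdag] at hj0d; exact (Finset.mem_filter.1 hj0d).2
  have hxiA : xdag iA ≠ 0 := by
    have h1 := hmax j0 hj0A
    have : 0 < |xdag iA| := lt_of_lt_of_le (abs_pos.2 hxj0) h1
    exact abs_pos.1 this
  have hiAdag : iA ∈ Adag := by rw [hAdag]; exact Finset.mem_filter.2 ⟨Finset.mem_univ _, hxiA⟩
  have hiAB : iA ∈ B := by rw [hB]; exact Finset.mem_sdiff.2 ⟨hiAdag, hiA⟩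
  -- support of u
  have hsupp : ∀ i, i ∉ Adag → u i = 0 := by
    intro i hi
    have hx0 : xdag i = 0 := by
      by_contra h
      exact hi (by rw [hAdag]; exact Finset.mem_filter.2 ⟨Finset.mem_univ _, h⟩)
    have hiA' : i ∉ A := fun h => hi (hAsub h)
    rw [hui, hx0, hexA i hiA', sub_zero]
  have hsuppu : (Finset.univ.filter fun i => u i ≠ 0) ⊆ Adag := by
    intro i hi
    simp only [Finset.mem_filter, Finset.mem_univ, true_and] at hi
    by_contra h
    exact hi (hsupp i h)
  -- sums
  set SA := ∑ i ∈ A, u i ^ 2 with hSA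
  set Sb := ∑ i ∈ B, xdag i ^ 2 with hSb
  set S := ∑ i, u i ^ 2 with hS
  have hSAnn : (0:ℝ) ≤ SA := Finset.sum_nonneg fun i _ => sq_nonneg _
  have hSbnn : (0:ℝ) ≤ Sb := Finset.sum_nonneg fun i _ => sq_nonneg _
  have hSnn : (0:ℝ) ≤ S := Finset.sum_nonneg fun i _ => sq_nonneg _
  have hAB : A ∪ B = Adag := by rw [hB]; exact Finset.union_sdiff_of_subset hAsub
  have hdisj : Disjoint A B := by rw [hB]; exact Finset.disjoint_sdiff
  have huB : ∀ i ∈ B, u i = xdag i := by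
    intro i hi
    have hiA' : i ∉ A := (Finset.mem_sdiff.1 (hB ▸ hi)).2
    rw [hui, hexA i hiA', sub_zero]
  have hSsplit : S = SA + Sb := by
    have h1 : ∑ i, u i ^ 2 = ∑ i ∈ A ∪ B, u i ^ 2 := by
      refine (Finset.sum_subset (Finset.subset_univ _) ?_).symm
      intro x _ hx
      have hxn : x ∉ Adag := by rwa [hAB] at hx
      rw [hsupp x hxn]; norm_num
    rw [hS, h1, Finset.sum_union hdisj, ← hSA]
    congr 1
    exact Finset.sum_congr rfl fun i hi => by rw [huB i hi]
  -- square roots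
  set a := Real.sqrt SA with ha
  set b := Real.sqrt Sb with hb
  set c := Real.sqrt (∑ i ∈ A, d i ^ 2) with hc
  set s := Real.sqrt S with hs
  have hann : 0 ≤ a := Real.sqrt_nonneg _
  have hbnn : 0 ≤ b := Real.sqrt_nonneg _
  have hcnn : 0 ≤ c := Real.sqrt_nonneg _
  have hsnn : 0 ≤ s := Real.sqrt_nonneg _
  have ha2 : a ^ 2 = SA := Real.sq_sqrt hSAnn
  have hb2 : b ^ 2 = Sb := Real.sq_sqrt hSbnn
  have hs2 : s ^ 2 = S := Real.sq_sqrt hSnn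
  -- first application of near-orthogonality: v = uA, w = u
  set uA : Fin p → ℝ := fun i => if i ∈ A then u i else 0 with huA
  have hsuppuA : (Finset.univ.filter fun i => uA i ≠ 0) ⊆ Adag := by
    intro i hi
    simp only [Finset.mem_filter, Finset.mem_univ, true_and] at hi
    by_contra h
    have hiA' : i ∉ A := fun hh => h (hAsub hh)
    exact hi (by simp [huA, hiA'])
  have hcard1 : ((Finset.univ.filter fun i => uA i ≠ 0)
      ∪ (Finset.univ.filter fun i => u i ≠ 0)).card ≤ T + 1 := by
    refine le_trans (le_trans (Finset.card_le_card (Finset.union_subset hsuppuA hsuppu)) ?_) (Nat.le_succ T)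
    rw [hT]
  have key1 := rip_inner hδ0.le hRIP uA u hcard1
  have e_dp : ∑ i, uA i * u i = SA := by
    rw [hSA, ← Finset.sum_subset (Finset.subset_univ A) (fun x _ hx => by simp [huA, hx])]
    exact Finset.sum_congr rfl fun i hi => by simp [huA, hi, sq]
  have e_sq : ∑ i, uA i ^ 2 = SA := by
    rw [hSA, ← Finset.sum_subset (Finset.subset_univ A) (fun x _ hx => by simp [huA, hx])]
    exact Finset.sum_congr rfl fun i hi => by simp [huA, hi]
  have e_dpPsi : ∑ j, (Ψ *ᵥ uA) j * (Ψ *ᵥ u) j = ∑ i ∈ A, u i * d i := by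
    have h1 : uA ⬝ᵥ (Ψᵀ *ᵥ (Ψ *ᵥ u)) = (Ψ *ᵥ uA) ⬝ᵥ (Ψ *ᵥ u) := by
      rw [Matrix.dotProduct_mulVec, Matrix.vecMul_transpose]
    have h2 : uA ⬝ᵥ (Ψᵀ *ᵥ (Ψ *ᵥ u)) = ∑ i, uA i * d i :=
      Finset.sum_congr rfl fun i _ => by rw [hd i]
    have h3 : ∑ i, uA i * d i = ∑ i ∈ A, u i * d i := by
      rw [← Finset.sum_subset (Finset.subset_univ A) (fun x _ hx => by simp [huA, hx])]
      exact Finset.sum_congr rfl fun i hi => by simp [huA, hi]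
    calc ∑ j, (Ψ *ᵥ uA) j * (Ψ *ᵥ u) j = (Ψ *ᵥ uA) ⬝ᵥ (Ψ *ᵥ u) := rfl
      _ = ∑ i ∈ A, u i * d i := by rw [← h1, h2, h3]
  rw [e_dp, e_dpPsi, e_sq] at key1
  have hCS : ∑ i ∈ A, u i * d i ≤ a * c := by
    have h := Finset.sum_mul_sq_le_sq_mul_sq A u d
    calc ∑ i ∈ A, u i * d i ≤ |∑ i ∈ A, u i * d i| := le_abs_self _
      _ = Real.sqrt ((∑ i ∈ A, u i * d i) ^ 2) := (Real.sqrt_sq_eq_abs _).symm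
      _ ≤ Real.sqrt (SA * ∑ i ∈ A, d i ^ 2) := Real.sqrt_le_sqrt (by rw [hSA]; exact h)
      _ = a * c := Real.sqrt_mul hSAnn _
  have ha_le : a ≤ c + δ * s := by
    have h1 : SA ≤ a * c + δ * a * s := by
      have := (abs_le.1 key1).1
      linarith
    rcases eq_or_lt_of_le hann with h | h
    · have : 0 ≤ c + δ * s := by positivity
      linarith
    · have h2 : a * a ≤ a * (c + δ * s) := by nlinarith
      exact le_of_mul_le_mul_left h2 h
  -- second application: v = indicator of iA, w = u
  set v2 : Fin p → ℝ := fun i => if i = iA then (1:ℝ) else 0 with hv2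
  have hsuppv2 : (Finset.univ.filter fun i => v2 i ≠ 0) ⊆ Adag := by
    intro i hi
    simp only [Finset.mem_filter, Finset.mem_univ, true_and] at hi
    by_cases h : i = iA
    · subst h; exact hiAdag
    · exact absurd (by simp [hv2, h]) hi
  have hcard2 : ((Finset.univ.filter fun i => v2 i ≠ 0)
      ∪ (Finset.univ.filter fun i => u i ≠ 0)).card ≤ T + 1 := by
    refine le_trans (le_trans (Finset.card_le_card (Finset.union_subset hsuppv2 hsuppu)) ?_) (Nat.le_succ T)
    rw [hT]
  have key2 := rip_inner hδ0.le hRIP v2 u hcard2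
  have e2_dp : ∑ i, v2 i * u i = xdag iA := by
    have h1 : ∑ i, v2 i * u i = u iA := by
      rw [Finset.sum_congr rfl (fun i _ => show v2 i * u i = if i = iA then u i else 0 by
        by_cases h : i = iA <;> simp [hv2, h])]
      simp
    rw [h1, hui, hexA iA hiA, sub_zero]
  have e2_sq : ∑ i, v2 i ^ 2 = 1 := by
    rw [Finset.sum_congr rfl (fun i _ => show v2 i ^ 2 = if i = iA then (1:ℝ) else 0 by
      by_cases h : i = iA <;> simp [hv2, h])]
    simp
  have e2_dpPsi : ∑ j, (Ψ *ᵥ v2) j * (Ψ *ᵥ u) j = d iA := by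
    have h1 : v2 ⬝ᵥ (Ψᵀ *ᵥ (Ψ *ᵥ u)) = (Ψ *ᵥ v2) ⬝ᵥ (Ψ *ᵥ u) := by
      rw [Matrix.dotProduct_mulVec, Matrix.vecMul_transpose]
    have h2 : v2 ⬝ᵥ (Ψᵀ *ᵥ (Ψ *ᵥ u)) = ∑ i, v2 i * d i :=
      Finset.sum_congr rfl fun i _ => by rw [hd i]
    have h3 : ∑ i, v2 i * d i = d iA := by
      rw [Finset.sum_congr rfl (fun i _ => show v2 i * d i = if i = iA then d i else 0 by
        by_cases h : i = iA <;> simp [hv2, h])]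
      simp
    calc ∑ j, (Ψ *ᵥ v2) j * (Ψ *ᵥ u) j = (Ψ *ᵥ v2) ⬝ᵥ (Ψ *ᵥ u) := rfl
      _ = d iA := by rw [← h1, h2, h3]
  rw [e2_dp, e2_sq, e2_dpPsi, Real.sqrt_one] at key2
  -- key2 : |d iA - xdag iA| ≤ δ * 1 * s
  -- final arithmetic
  clear_value a b c s
  clear_value S SA Sb
  have hs_ab : s ≤ a + b := by
    have h1 : S ≤ (a + b) ^ 2 := by nlinarith [mul_nonneg hann hbnn]
    calc s = Real.sqrt S := hs
      _ ≤ Real.sqrt ((a + b) ^ 2) := Real.sqrt_le_sqrt h1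
      _ = a + b := Real.sqrt_sq (by positivity)
  have h9 : (1 - δ) * a ≤ c + δ * b := by nlinarith
  have h10sq : ((1 - δ) * s) ^ 2 ≤ (b + c) ^ 2 := by
    have hsq : ((1 - δ) * a) ^ 2 ≤ (c + δ * b) ^ 2 := by
      have h0 : 0 ≤ (1 - δ) * a := by positivity
      nlinarith
    have hsab2 : s ^ 2 = a ^ 2 + b ^ 2 := by rw [hs2, hSsplit, ha2, hb2]
    calc ((1 - δ) * s) ^ 2 = (1 - δ) ^ 2 * (a ^ 2 + b ^ 2) := by rw [mul_pow, hsab2]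
      _ ≤ (b + c) ^ 2 := by
          nlinarith [hsq, mul_nonneg (mul_nonneg hbnn hcnn) hδ'.le,
            mul_nonneg (mul_nonneg hδ0.le hδ'.le) (mul_nonneg hbnn hbnn)]
  have h10 : (1 - δ) * s ≤ b + c := by
    have h1 := Real.sqrt_le_sqrt h10sq
    rwa [Real.sqrt_sq (by positivity), Real.sqrt_sq (by positivity)] at h1
  have h11 : δ * s ≤ δ / (1 - δ) * (b + c) := by
    have he : δ * s = δ / (1 - δ) * ((1 - δ) * s) := by field_simp
    rw [he]
    exact mul_le_mul_of_nonneg_left h10 (by positivity)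
  have htri : |xdag iA| - |d iA| ≤ |d iA - xdag iA| := by
    have h1 := abs_sub_abs_le_abs_sub (xdag iA) (d iA)
    rwa [abs_sub_comm] at h1
  have key2' : |d iA - xdag iA| ≤ δ * s := by
    rw [hs, hS]; linarith [key2]
  linarith [key2', h11, htri]
end

section
/- (Claim 1a.) In the noise-free setting under Assumption 1, let A ⊆ A† satisfy J_{λ,2} ⊆ A, let d ∈ ℝ^p have |d_i| = λ for all i ∈ A, let x ∈ ℝ^p be given by x_i = 0 for i ∉ A and x_A = (Ψ_AᵗΨ_A)⁻¹(Ψ_Aᵗ y − d_A), and set d_i = Ψ_iᵗ(y − Ψ_A x_A) for i ∉ A. Define the next active set A' = {i : |x_i + d_i| > λ}. Then J_{λ,2} ⊆ A' ⊆ A†. -/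
open Matrix

lemma expand_sq {p : ℕ} (a b : Fin p → ℝ) :
    ∑ j, (a j + b j) ^ 2 = ∑ j, a j ^ 2 + 2 * ∑ j, a j * b j + ∑ j, b j ^ 2 := by
  rw [Finset.mul_sum, ← Finset.sum_add_distrib, ← Finset.sum_add_distrib]
  congr 1; funext j; ring

lemma mulVec_ext {n p : ℕ} (Ψ : Matrix (Fin n) (Fin p) ℝ) (A : Finset (Fin p))
    (w : Fin p → ℝ) (hw : ∀ i ∉ A, w i = 0) :
    Ψ *ᵥ w = colSub Ψ A *ᵥ (fun j : {i // i ∈ A} => w j.1) := by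
  funext j
  simp only [Matrix.mulVec, dotProduct, colSub, Matrix.of_apply]
  rw [show (∑ i, Ψ j i * w i) = ∑ i ∈ A, Ψ j i * w i from
    (Finset.sum_subset A.subset_univ (fun i _ hi => by simp [hw i hi])).symm,
    ← Finset.sum_attach A (fun i => Ψ j i * w i), Finset.univ_eq_attach]

lemma gram_isUnit {n p : ℕ} (Ψ : Matrix (Fin n) (Fin p) ℝ) (k : ℕ) (δ : ℝ) (hδ1 : δ < 1)
    (hRIP : HasRIP Ψ k δ) (A : Finset (Fin p)) (hcard : A.card ≤ k) :
    IsUnit ((colSub Ψ A)ᵀ * colSub Ψ A) := by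
  rw [← Matrix.mulVec_injective_iff_isUnit]
  have hker : ∀ v : {i // i ∈ A} → ℝ, ((colSub Ψ A)ᵀ * colSub Ψ A) *ᵥ v = 0 → v = 0 := by
    intro v hv
    set w : Fin p → ℝ := fun i => if h : i ∈ A then v ⟨i, h⟩ else 0 with hwdef
    have hw0 : ∀ i ∉ A, w i = 0 := fun i hi => by simp [hwdef, hi]
    have hwv : (fun j : {i // i ∈ A} => w j.1) = v := by
      funext j; simp [hwdef, j.2]
    have hΨw : Ψ *ᵥ w = colSub Ψ A *ᵥ v := by
      rw [mulVec_ext Ψ A w hw0, hwv]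
    have hzero : ∑ j, (colSub Ψ A *ᵥ v) j ^ 2 = 0 := by
      have h1 : v ⬝ᵥ (((colSub Ψ A)ᵀ * colSub Ψ A) *ᵥ v) = 0 := by rw [hv]; simp
      have h2 : v ⬝ᵥ (((colSub Ψ A)ᵀ * colSub Ψ A) *ᵥ v)
          = (colSub Ψ A *ᵥ v) ⬝ᵥ (colSub Ψ A *ᵥ v) := by
        rw [← Matrix.mulVec_mulVec, Matrix.dotProduct_mulVec, Matrix.vecMul_transpose]
      rw [h2] at h1
      simpa [dotProduct, sq] using h1
    have hsupp : (Finset.univ.filter (fun i => w i ≠ 0)).card ≤ k := by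
      refine le_trans (Finset.card_le_card ?_) hcard
      intro i hi
      by_contra hiA
      exact (Finset.mem_filter.mp hi).2 (hw0 i hiA)
    have hrip := (hRIP w hsupp).1
    rw [hΨw, hzero] at hrip
    have hwsum : ∑ i, w i ^ 2 ≤ 0 := by nlinarith [Finset.sum_nonneg (fun i (_ : i ∈ Finset.univ) => sq_nonneg (w i))]
    have hwall : ∀ i, w i = 0 := by
      intro i
      have := (Finset.sum_eq_zero_iff_of_nonneg (fun i _ => sq_nonneg (w i))).mp
        (le_antisymm hwsum (Finset.sum_nonneg (fun i _ => sq_nonneg (w i)))) i (Finset.mem_univ i)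
      exact pow_eq_zero_iff (by norm_num) |>.mp this
    funext j
    rw [← hwv]; exact hwall j.1
  intro a b hab
  have : ((colSub Ψ A)ᵀ * colSub Ψ A) *ᵥ (a - b) = 0 := by
    rw [Matrix.mulVec_sub, hab, sub_self]
  have := hker _ this
  exact sub_eq_zero.mp this

lemma rip_offdiag {n p : ℕ} (Ψ : Matrix (Fin n) (Fin p) ℝ) (k : ℕ) (δ : ℝ)
    (hRIP : HasRIP Ψ k δ) (S : Finset (Fin p)) (e : Fin p → ℝ)
    (he : ∀ j ∉ S, e j = 0) (hcard : S.card + 1 ≤ k) (i : Fin p) :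
    |(∑ j, Ψ j i * (Ψ *ᵥ e) j) - e i| ≤ δ * Real.sqrt (∑ j, e j ^ 2) := by
  by_cases he0 : e = 0
  · simp [he0, Matrix.mulVec_zero]
  · have hS0 : (0:ℝ) < ∑ j, e j ^ 2 := by
      rcases Function.ne_iff.mp he0 with ⟨j0, hj0⟩
      have h1 : (0:ℝ) < e j0 ^ 2 :=
        lt_of_le_of_ne (sq_nonneg _) (Ne.symm (pow_ne_zero 2 hj0))
      exact lt_of_lt_of_le h1 (Finset.single_le_sum (fun j _ => sq_nonneg (e j))
        (Finset.mem_univ j0))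
    have hc0 : 0 < Real.sqrt (∑ j, e j ^ 2) := Real.sqrt_pos.mpr hS0
    set c : ℝ := Real.sqrt (∑ j, e j ^ 2)
    have hc2 : c ^ 2 = ∑ j, e j ^ 2 := Real.sq_sqrt hS0.le
    set w : Fin p → ℝ := c⁻¹ • e with hw
    have hew : e = c • w := by
      rw [hw, smul_smul, mul_inv_cancel₀ hc0.ne', one_smul]
    have hwa : ∀ j, w j = c⁻¹ * e j := fun j => rfl
    have hw2 : ∑ j, w j ^ 2 = 1 := by
      simp only [hwa, mul_pow, ← Finset.mul_sum, ← hc2]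
      field_simp
    set u : Fin p → ℝ := Pi.single i 1 with hu
    have hua : ∀ j, u j = if j = i then 1 else 0 := fun j => by
      rw [hu, Pi.single_apply]
    have hu2 : ∑ j, u j ^ 2 = 1 := by simp [hua, sq]
    have huw : ∑ j, u j * w j = w i := by simp [hua, ite_mul]
    have hΨu : ∀ j, (Ψ *ᵥ u) j = Ψ j i := by
      intro j; rw [hu]; simp
    have hcards : ∀ v : Fin p → ℝ, (∀ j, v j ≠ 0 → j = i ∨ e j ≠ 0) →
        (Finset.univ.filter (fun j => v j ≠ 0)).card ≤ k := by
      intro v hv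
      have hsub : Finset.univ.filter (fun j => v j ≠ 0) ⊆ insert i S := by
        intro j hj
        rcases hv j (Finset.mem_filter.mp hj).2 with h | h
        · simp [h]
        · by_cases hjS : j ∈ S
          · exact Finset.mem_insert_of_mem hjS
          · exact absurd (he j hjS) h
      exact le_trans (Finset.card_le_card hsub) (le_trans (Finset.card_insert_le i S) hcard)
    have hwsupp : ∀ j, w j ≠ 0 → e j ≠ 0 := by
      intro j hj heq; apply hj; rw [hwa, heq, mul_zero]
    have hsuppP : ∀ j : Fin p, (u + w) j ≠ 0 → j = i ∨ e j ≠ 0 := by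
      intro j hj
      by_cases hji : j = i
      · exact Or.inl hji
      · right; apply hwsupp; intro hwj; apply hj
        show u j + w j = 0
        rw [hua, if_neg hji, hwj, add_zero]
    have hsuppM : ∀ j : Fin p, (u - w) j ≠ 0 → j = i ∨ e j ≠ 0 := by
      intro j hj
      by_cases hji : j = i
      · exact Or.inl hji
      · right; apply hwsupp; intro hwj; apply hj
        show u j - w j = 0
        rw [hua, if_neg hji, hwj, sub_zero]
    have hP := hRIP (u + w) (hcards _ hsuppP)
    have hM := hRIP (u - w) (hcards _ hsuppM)
    have hsumP : ∑ j, (u + w) j ^ 2 = 2 + 2 * w i := by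
      calc ∑ j, (u + w) j ^ 2 = ∑ j, (u j + w j) ^ 2 := rfl
        _ = 2 + 2 * w i := by rw [expand_sq, hu2, hw2, huw]; ring
    have hsumM : ∑ j, (u - w) j ^ 2 = 2 - 2 * w i := by
      have h := expand_sq u (fun j => -(w j))
      simp only [mul_neg, neg_sq, Finset.sum_neg_distrib] at h
      calc ∑ j, (u - w) j ^ 2 = ∑ j, (u j + -(w j)) ^ 2 := by
            refine Finset.sum_congr rfl fun j _ => ?_
            rw [show (u - w) j = u j - w j from rfl, sub_eq_add_neg]
        _ = 2 - 2 * w i := by rw [h, hu2, hw2, huw]; ring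
    set P : ℝ := ∑ j, (Ψ *ᵥ u) j * (Ψ *ᵥ w) j with hPdef
    have hfP : ∑ j, (Ψ *ᵥ (u + w)) j ^ 2
        = ∑ j, (Ψ *ᵥ u) j ^ 2 + 2 * P + ∑ j, (Ψ *ᵥ w) j ^ 2 := by
      calc ∑ j, (Ψ *ᵥ (u + w)) j ^ 2 = ∑ j, ((Ψ *ᵥ u) j + (Ψ *ᵥ w) j) ^ 2 := by
            rw [Matrix.mulVec_add]; rfl
        _ = _ := by rw [expand_sq, hPdef]
    have hfM : ∑ j, (Ψ *ᵥ (u - w)) j ^ 2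
        = ∑ j, (Ψ *ᵥ u) j ^ 2 - 2 * P + ∑ j, (Ψ *ᵥ w) j ^ 2 := by
      have h := expand_sq (Ψ *ᵥ u) (fun j => -((Ψ *ᵥ w) j))
      simp only [mul_neg, neg_sq, Finset.sum_neg_distrib] at h
      calc ∑ j, (Ψ *ᵥ (u - w)) j ^ 2 = ∑ j, ((Ψ *ᵥ u) j + -((Ψ *ᵥ w) j)) ^ 2 := by
            rw [Matrix.mulVec_sub]
            refine Finset.sum_congr rfl fun j _ => ?_
            rw [show (Ψ *ᵥ u - Ψ *ᵥ w) j = (Ψ *ᵥ u) j - (Ψ *ᵥ w) j from rfl, sub_eq_add_neg]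
        _ = _ := by rw [h, hPdef]; ring
    rw [hsumP, hfP] at hP
    rw [hsumM, hfM] at hM
    have habs : |P - w i| ≤ δ := by
      rw [abs_sub_le_iff]
      constructor <;> nlinarith [hP.1, hP.2, hM.1, hM.2]
    have heq1 : ∑ j, Ψ j i * (Ψ *ᵥ e) j = c * P := by
      rw [hew, Matrix.mulVec_smul, hPdef, Finset.mul_sum]
      refine Finset.sum_congr rfl fun j _ => ?_
      rw [hΨu, show (c • (Ψ *ᵥ w)) j = c * (Ψ *ᵥ w) j from rfl]
      ring
    have heq2 : e i = c * w i := by rw [hew]; rfl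
    rw [heq1, heq2, ← mul_sub, abs_mul, abs_of_pos hc0, mul_comm δ c]
    exact mul_le_mul_of_nonneg_left habs hc0.le

/-- Claim 1a: if `J_{λ,2} ⊆ A ⊆ A†`, then the next active set `A'` of the
PDAS step satisfies `J_{λ,2} ⊆ A' ⊆ A†`. -/
theorem stmt_14 {n p : ℕ} (Ψ : Matrix (Fin n) (Fin p) ℝ)
    (xdag : Fin p → ℝ) (Adag : Finset (Fin p))
    (hAdag : Adag = Finset.univ.filter (fun i => xdag i ≠ 0))
    (T : ℕ) (hT : T = Adag.card)
    (y : Fin n → ℝ) (hy : y = Ψ *ᵥ xdag)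
    (δ : ℝ) (hδ0 : 0 < δ) (hδ1 : δ < 1)
    (hRIP : HasRIP Ψ (T + 1) δ)
    (hAss1 : δ ≤ 1 / (4 * Real.sqrt T + 1))
    (lam : ℝ) (hlam : 0 < lam)
    (A : Finset (Fin p)) (hA : A ⊆ Adag)
    (hJ2 : Finset.univ.filter (fun i => 2 * lam ≤ |xdag i|) ⊆ A)
    (d x : Fin p → ℝ)
    (hdA : ∀ i ∈ A, |d i| = lam)
    (hxI : ∀ i ∉ A, x i = 0)
    (hxA : (fun j : {i // i ∈ A} => x j.1) =
      ((colSub Ψ A)ᵀ * colSub Ψ A)⁻¹ *ᵥ ((colSub Ψ A)ᵀ *ᵥ y - fun j => d j.1))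
    (hdI : ∀ i ∉ A, d i = (Ψᵀ *ᵥ (y - colSub Ψ A *ᵥ fun j => x j.1)) i)
 :
    Finset.univ.filter (fun i => 2 * lam ≤ |xdag i|) ⊆
        Finset.univ.filter (fun i => lam < |x i + d i|) ∧
      Finset.univ.filter (fun i => lam < |x i + d i|) ⊆ Adag := by
  have hcardA : (A.card : ℕ) ≤ T := hT ▸ Finset.card_le_card hA
  have hGunit : IsUnit ((colSub Ψ A)ᵀ * colSub Ψ A) :=
    gram_isUnit Ψ (T + 1) δ hδ1 hRIP A (le_trans hcardA (Nat.le_succ T))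
  set xA : {i // i ∈ A} → ℝ := fun j => x j.1 with hxAdef
  set e : Fin p → ℝ := fun i => xdag i - x i with hedef
  have heapp : ∀ i, e i = xdag i - x i := fun i => rfl
  have hesupp : ∀ j ∉ Adag, e j = 0 := by
    intro j hj
    have h1 : xdag j = 0 := by
      by_contra h
      exact hj (hAdag ▸ Finset.mem_filter.mpr ⟨Finset.mem_univ j, h⟩)
    have h2 : x j = 0 := hxI j (fun hjA => hj (hA hjA))
    rw [heapp, h1, h2, sub_zero]
  have hΨx : Ψ *ᵥ x = colSub Ψ A *ᵥ xA := mulVec_ext Ψ A x hxI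
  have hΨe : Ψ *ᵥ e = y - colSub Ψ A *ᵥ xA := by
    have h : Ψ *ᵥ e = Ψ *ᵥ xdag - Ψ *ᵥ x := by
      rw [← Matrix.mulVec_sub]; rfl
    rw [h, hΨx, hy]
  have hnormal : ((colSub Ψ A)ᵀ * colSub Ψ A) *ᵥ xA
      = ((colSub Ψ A)ᵀ *ᵥ y - fun j => d j.1) := by
    rw [hxA, Matrix.mulVec_mulVec,
      Matrix.mul_nonsing_inv _ ((Matrix.isUnit_iff_isUnit_det _).mp hGunit),
      Matrix.one_mulVec]
  have key : ∀ i, d i = ∑ j, Ψ j i * (Ψ *ᵥ e) j := by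
    intro i
    have hsub : ∀ u v : Fin n → ℝ, ∑ j, Ψ j i * (u - v) j
        = ∑ j, Ψ j i * u j - ∑ j, Ψ j i * v j := by
      intro u v
      rw [← Finset.sum_sub_distrib]
      refine Finset.sum_congr rfl fun j _ => ?_
      rw [show (u - v) j = u j - v j from rfl]; ring
    by_cases hiA : i ∈ A
    · have h := congrFun hnormal ⟨i, hiA⟩
      have hL : (((colSub Ψ A)ᵀ * colSub Ψ A) *ᵥ xA) ⟨i, hiA⟩
          = ∑ j, Ψ j i * (colSub Ψ A *ᵥ xA) j := by
        rw [← Matrix.mulVec_mulVec]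
        simp [Matrix.mulVec, dotProduct, colSub, Matrix.transpose_apply]
      have hR : ((colSub Ψ A)ᵀ *ᵥ y) ⟨i, hiA⟩ = ∑ j, Ψ j i * y j := by
        simp [Matrix.mulVec, dotProduct, colSub, Matrix.transpose_apply]
      have hRR : (((colSub Ψ A)ᵀ *ᵥ y - fun j : {i // i ∈ A} => d j.1) ⟨i, hiA⟩)
          = ((colSub Ψ A)ᵀ *ᵥ y) ⟨i, hiA⟩ - d i := rfl
      rw [hL, hRR, hR] at h
      rw [hΨe, hsub]
      linarith [h]
    · rw [hdI i hiA, hΨe]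
      simp [Matrix.mulVec, dotProduct, Matrix.transpose_apply]
  set N : ℝ := Real.sqrt (∑ j, e j ^ 2) with hNdef
  have hN0 : 0 ≤ N := Real.sqrt_nonneg _
  have key2 : ∀ i, |d i - e i| ≤ δ * N := by
    intro i
    rw [key i]
    exact rip_offdiag Ψ (T + 1) δ hRIP Adag e hesupp (by omega) i
  have heA : ∀ i ∈ A, |e i| ≤ lam + δ * N := by
    intro i hi
    have h1 := key2 i
    have h2 := hdA i hi
    have h3 : |e i| = |d i - (d i - e i)| := by ring_nf
    rw [h3]
    calc |d i - (d i - e i)| ≤ |d i| + |d i - e i| := abs_sub _ _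
      _ ≤ lam + δ * N := by rw [h2]; linarith
  have heB : ∀ i, i ∉ A → |e i| ≤ 2 * lam := by
    intro i hiA
    have hx0 : x i = 0 := hxI i hiA
    have h2 : ¬ (2 * lam ≤ |xdag i|) := fun h =>
      hiA (hJ2 (Finset.mem_filter.mpr ⟨Finset.mem_univ i, h⟩))
    have h3 : |e i| = |xdag i| := by rw [heapp, hx0, sub_zero]
    linarith [h3]
  have hTc : (0:ℝ) ≤ (T : ℝ) := Nat.cast_nonneg T
  have hsum : ∑ j, e j ^ 2 ≤ (T : ℝ) * (lam + δ * N) ^ 2 + (T : ℝ) * (2 * lam) ^ 2 := by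
    have h0 : ∑ j, e j ^ 2 = ∑ j ∈ Adag, e j ^ 2 :=
      (Finset.sum_subset Adag.subset_univ (fun j _ hj => by rw [hesupp j hj]; ring)).symm
    have hsplit : ∑ j ∈ Adag \ A, e j ^ 2 + ∑ j ∈ A, e j ^ 2 = ∑ j ∈ Adag, e j ^ 2 :=
      Finset.sum_sdiff hA
    have h1 : ∑ j ∈ A, e j ^ 2 ≤ (A.card : ℝ) * (lam + δ * N) ^ 2 := by
      calc ∑ j ∈ A, e j ^ 2 ≤ ∑ _j ∈ A, (lam + δ * N) ^ 2 := by
            refine Finset.sum_le_sum fun i hi => ?_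
            have hh := abs_le.mp (heA i hi)
            exact sq_le_sq' (by linarith [hh.1]) hh.2
        _ = (A.card : ℝ) * (lam + δ * N) ^ 2 := by
            rw [Finset.sum_const, nsmul_eq_mul]
    have h2 : ∑ j ∈ Adag \ A, e j ^ 2 ≤ ((Adag \ A).card : ℝ) * (2 * lam) ^ 2 := by
      calc ∑ j ∈ Adag \ A, e j ^ 2 ≤ ∑ _j ∈ Adag \ A, (2 * lam) ^ 2 := by
            refine Finset.sum_le_sum fun i hi => ?_
            have hh := abs_le.mp (heB i (Finset.mem_sdiff.mp hi).2)
            exact sq_le_sq' (by linarith [hh.1]) hh.2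
        _ = _ := by rw [Finset.sum_const, nsmul_eq_mul]
    have hc1 : (A.card : ℝ) ≤ (T : ℝ) := by exact_mod_cast hcardA
    have hc2 : ((Adag \ A).card : ℝ) ≤ (T : ℝ) := by
      have : (Adag \ A).card ≤ Adag.card := Finset.card_le_card (Finset.sdiff_subset)
      exact_mod_cast hT ▸ this
    have hsq1 : (0:ℝ) ≤ (lam + δ * N) ^ 2 := sq_nonneg _
    have hsq2 : (0:ℝ) ≤ (2 * lam) ^ 2 := sq_nonneg _
    rw [h0, ← hsplit]
    nlinarith [h1, h2, mul_le_mul_of_nonneg_right hc1 hsq1, mul_le_mul_of_nonneg_right hc2 hsq2]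
  have hrhs0 : 0 ≤ 3 * lam + δ * N := by nlinarith
  have hNle : N ≤ Real.sqrt T * (3 * lam + δ * N) := by
    have hsq : ∑ j, e j ^ 2 ≤ (Real.sqrt T * (3 * lam + δ * N)) ^ 2 := by
      rw [mul_pow, Real.sq_sqrt hTc]
      nlinarith [mul_nonneg hTc (mul_nonneg hlam.le (mul_nonneg hδ0.le hN0))]
    calc N = Real.sqrt (∑ j, e j ^ 2) := hNdef
      _ ≤ Real.sqrt ((Real.sqrt T * (3 * lam + δ * N)) ^ 2) := Real.sqrt_le_sqrt hsq
      _ = Real.sqrt T * (3 * lam + δ * N) :=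
          Real.sqrt_sq (mul_nonneg (Real.sqrt_nonneg _) hrhs0)
  have hs0 : (0:ℝ) ≤ Real.sqrt T := Real.sqrt_nonneg _
  have hs1 : δ * (4 * Real.sqrt T + 1) ≤ 1 := by
    have h41 : (0:ℝ) < 4 * Real.sqrt T + 1 := by positivity
    rw [le_div_iff₀ h41] at hAss1
    exact hAss1
  have hDlt : δ * N < lam := by
    by_contra hcon
    push_neg at hcon
    have h1 : δ * N ≤ δ * (Real.sqrt T * (3 * lam + δ * N)) :=
      mul_le_mul_of_nonneg_left hNle hδ0.le
    have ht : δ * Real.sqrt T ≤ (1 - δ) / 4 := by nlinarith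
    have h1t : (0:ℝ) < 1 - δ * Real.sqrt T := by nlinarith
    nlinarith [mul_nonneg (sub_nonneg.mpr hcon) h1t.le,
      mul_le_mul_of_nonneg_left ht hlam.le]
  constructor
  · intro i hi
    rw [Finset.mem_filter] at hi ⊢
    refine ⟨Finset.mem_univ i, ?_⟩
    have h2 := key2 i
    have hxd : xdag i = (x i + d i) - (d i - e i) := by rw [heapp]; ring
    have habs : |xdag i| ≤ |x i + d i| + |d i - e i| := by
      rw [hxd]; exact abs_sub _ _
    have := hi.2
    have h5 : |x i + d i| ≥ 2 * lam - δ * N := by linarith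
    linarith
  · intro i hi
    rw [Finset.mem_filter] at hi
    by_contra hiAdag
    have hxd0 : xdag i = 0 := by
      by_contra h
      exact hiAdag (hAdag ▸ Finset.mem_filter.mpr ⟨Finset.mem_univ i, h⟩)
    have hiA : i ∉ A := fun h => hiAdag (hA h)
    have hx0 : x i = 0 := hxI i hiA
    have he0 : e i = 0 := by rw [heapp, hxd0, hx0, sub_zero]
    have h2 := key2 i
    rw [he0, sub_zero] at h2
    have h3 : |x i + d i| ≤ δ * N := by rw [hx0, zero_add]; exact h2
    exact absurd hi.2 (not_lt.mpr (h3.trans hDlt.le))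
end
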